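/- arXiv:0907.1477 — 9 statements merged into one kernel-verified Lean document; each statement's English description precedes it below -/
import Mathlib

section
/- Let m, S, b be integers with S ≥ 5, S/2 < m < S, 1 ≤ b < S/2, and let a = S - b. For any z in the open sector S_m = {z ≠ 0 : -π/m < arg z < π/m} with |z| > 1, the integral I(z) = ∫_{[z, z∞)} (1+u^m)^{b/m} du/u^{S+1} (integration along the ray {tz : t ≥ 1}, principal branch of the m-th root power) equals the convergent series Σ_{n≥0} (1/(a+mn))·binom(b/m, n)·z^{-a-mn}, where binom(b/m,n) is the generalized binomial coefficient. -/
open Complex MeasureTheory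

/-- Generalized binomial coefficient `binom(x, n)` for complex `x`. -/
noncomputable def genBinomC (x : ℂ) (n : ℕ) : ℂ :=
    (∏ k ∈ Finset.range n, (x - k)) / (n.factorial : ℂ)

/-- The Abelian integral `I_{m,S,b}(z) = (1/z^S) ∫_1^∞ (1+(tz)^m)^{b/m} dt/t^{S+1}`,
i.e. `∫_{[z,z∞)} (1+u^m)^{b/m} du/u^{S+1}` (principal branch). -/
noncomputable def abelI (m S b : ℕ) (z : ℂ) : ℂ :=
    z ^ (-(S : ℤ)) *
      ∫ t in Set.Ioi (1 : ℝ), (1 + ((t : ℂ) * z) ^ m) ^ ((b : ℂ) / m) / (t : ℂ) ^ (S + 1)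

lemma iter_deriv_cpow (x : ℂ) (n : ℕ) :
    Set.EqOn (iteratedDeriv n (fun v : ℂ => (1 + v) ^ x))
      (fun v => (∏ k ∈ Finset.range n, (x - k)) * (1 + v) ^ (x - n)) (Metric.ball 0 1) := by
  induction n with
  | zero => intro v hv; simp [iteratedDeriv_zero]
  | succ n ih =>
    intro v hv
    have hv' : Metric.ball (0:ℂ) 1 ∈ nhds v := (Metric.isOpen_ball).mem_nhds hv
    have heq : iteratedDeriv n (fun v : ℂ => (1 + v) ^ x) =ᶠ[nhds v]
        (fun v => (∏ k ∈ Finset.range n, (x - k)) * (1 + v) ^ (x - n)) :=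
      Filter.eventuallyEq_of_mem hv' ih
    have hslit : (1 + v) ∈ Complex.slitPlane := by
      refine Complex.mem_slitPlane_iff.2 (Or.inl ?_)
      have : ‖v‖ < 1 := by simpa using hv
      have := Complex.abs_re_le_norm v
      simp only [Complex.add_re, Complex.one_re]
      have h2 := abs_lt.mp (lt_of_le_of_lt this (by simpa using hv) : |v.re| < 1)
      linarith [h2.1]
    have hD : HasDerivAt (fun v : ℂ => (∏ k ∈ Finset.range n, (x - k)) * (1 + v) ^ (x - n))
        ((∏ k ∈ Finset.range n, (x - k)) * ((x - n) * (1 + v) ^ (x - n - 1) * 1)) v := by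
      exact (((hasDerivAt_id v).const_add 1).cpow_const hslit).const_mul _
    rw [iteratedDeriv_succ, heq.deriv_eq, hD.deriv, Finset.prod_range_succ]
    simp only [mul_one]
    push_cast
    rw [show x - (↑n + 1) = x - ↑n - 1 by ring, mul_assoc]

lemma hasSum_genBinomC (x w : ℂ) (hw : ‖w‖ < 1) :
    HasSum (fun n : ℕ => genBinomC x n * w ^ n) ((1 + w) ^ x) := by
  have hdiff : DifferentiableOn ℂ (fun v : ℂ => (1 + v) ^ x) (Metric.ball 0 1) := by
    intro v hv
    have hslit : (1 + v) ∈ Complex.slitPlane := by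
      refine Complex.mem_slitPlane_iff.2 (Or.inl ?_)
      have h1 : |v.re| ≤ ‖v‖ := Complex.abs_re_le_norm v
      have h2 := abs_lt.mp (lt_of_le_of_lt h1 (by simpa using hv) : |v.re| < 1)
      simp only [Complex.add_re, Complex.one_re]
      linarith [h2.1]
    exact ((((hasDerivAt_id v).const_add 1).cpow_const hslit)).differentiableAt.differentiableWithinAt
  have hmem : w ∈ Metric.ball (0:ℂ) 1 := by simpa using hw
  have H := Complex.hasSum_taylorSeries_on_ball hdiff hmem
  convert H using 2 with n
  · rfl
  rw [iter_deriv_cpow x n (by simpa using (show (0:ℝ) < 1 by norm_num) : (0:ℂ) ∈ Metric.ball 0 1)]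
  simp only [add_zero, Complex.one_cpow, mul_one, smul_eq_mul, genBinomC]
  field_simp
  ring

lemma key_branch (m b : ℕ) (hm : 0 < m) (u : ℂ) (hu0 : u ≠ 0)
    (h1 : -(Real.pi / m) < u.arg) (h2 : u.arg < Real.pi / m) (hu1 : 1 < ‖u‖) :
    (1 + u ^ m) ^ ((b : ℂ) / m) = u ^ b * (1 + (u ^ m)⁻¹) ^ ((b : ℂ) / m) := by
  have hm' : (0:ℝ) < m := by exact_mod_cast hm
  have hum0 : u ^ m ≠ 0 := pow_ne_zero _ hu0
  set w : ℂ := (u ^ m)⁻¹ with hw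
  have habsum : 1 < ‖u ^ m‖ := by
    rw [norm_pow]; exact one_lt_pow₀ hu1 hm.ne'
  have habsw : ‖w‖ < 1 := by
    rw [hw, norm_inv]
    exact inv_lt_one_of_one_lt₀ habsum
  have hrew : 0 < (1 + w).re := by
    have h1' : |w.re| ≤ ‖w‖ := Complex.abs_re_le_norm w
    have h2' := abs_lt.mp (lt_of_le_of_lt h1' habsw)
    simp only [Complex.add_re, Complex.one_re]
    linarith [h2'.1]
  have h1w0 : (1 + w) ≠ 0 := fun h => by simp [h] at hrew
  have h1um : 1 + u ^ m = u ^ m * (1 + w) := by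
    rw [hw, mul_add, mul_one, mul_inv_cancel₀ hum0]; ring
  have h1um0 : 1 + u ^ m ≠ 0 := by rw [h1um]; exact mul_ne_zero hum0 h1w0
  -- bounds on θ = m * arg u
  have hθub : (m : ℝ) * u.arg < Real.pi := by
    have := (lt_div_iff₀ hm').mp h2
    linarith [this]
  have hθlb : -Real.pi < (m : ℝ) * u.arg := by
    have hx : -Real.pi / (m:ℝ) < u.arg := by rwa [neg_div]
    have := (div_lt_iff₀ hm').mp hx
    linarith [this]
  -- imaginary part of u^m
  have himum : (u ^ m).im = ‖u‖ ^ m * Real.sin ((m : ℝ) * u.arg) := by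
    conv_lhs => rw [← Complex.norm_mul_exp_arg_mul_I u]
    rw [mul_pow, ← Complex.exp_nat_mul]
    have : ((m : ℂ) * (↑u.arg * Complex.I)) = ↑((m : ℝ) * u.arg) * Complex.I := by
      push_cast; ring
    rw [this, ← Complex.ofReal_pow, Complex.mul_im, Complex.ofReal_re, Complex.ofReal_im,
      Complex.exp_ofReal_mul_I_im, Complex.exp_ofReal_mul_I_re]
    ring
  have hwim : w.im = -(u ^ m).im / Complex.normSq (u ^ m) := Complex.inv_im _
  have hargw : |Complex.arg (1 + w)| < Real.pi / 2 :=
    Complex.abs_arg_lt_pi_div_two_iff.2 (Or.inl hrew)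
  have hargw' := abs_lt.mp hargw
  -- sign opposition and total bound
  have hsum1 : -Real.pi < (m : ℝ) * u.arg + Complex.arg (1 + w) ∧
      (m : ℝ) * u.arg + Complex.arg (1 + w) < Real.pi := by
    rcases le_or_gt 0 ((m : ℝ) * u.arg) with hθ | hθ
    · have hs : 0 ≤ Real.sin ((m : ℝ) * u.arg) :=
        Real.sin_nonneg_of_nonneg_of_le_pi hθ hθub.le
      have him : 0 ≤ (u ^ m).im := by
        rw [himum]; positivity
      have hwim' : w.im ≤ 0 := by
        rw [hwim]
        apply div_nonpos_of_nonpos_of_nonneg (by linarith) (Complex.normSq_nonneg _)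
      have hargle : Complex.arg (1 + w) ≤ 0 := by
        rcases lt_or_eq_of_le (by simpa using hwim' : (1 + w).im ≤ 0) with h | h
        · exact (Complex.arg_neg_iff.2 h).le
        · have : (1 + w) = ((1 + w).re : ℂ) := Complex.ext rfl (by simp [h])
          rw [this, Complex.arg_ofReal_of_nonneg hrew.le]
      constructor <;> nlinarith [Real.pi_pos, hargw'.1, hargw'.2]
    · have hs : Real.sin ((m : ℝ) * u.arg) ≤ 0 := by
        have := Real.sin_nonneg_of_nonneg_of_le_pi (by linarith : 0 ≤ -((m:ℝ) * u.arg))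
          (by linarith : -((m:ℝ) * u.arg) ≤ Real.pi)
        rw [Real.sin_neg] at this; linarith
      have him : (u ^ m).im ≤ 0 := by
        rw [himum]
        apply mul_nonpos_of_nonneg_of_nonpos (by positivity) hs
      have hwim' : 0 ≤ w.im := by
        rw [hwim]
        apply div_nonneg (by linarith) (Complex.normSq_nonneg _)
      have hargle : 0 ≤ Complex.arg (1 + w) :=
        Complex.arg_nonneg_iff.2 (by simpa using hwim')
      constructor <;> nlinarith [Real.pi_pos, hargw'.1, hargw'.2]
  -- log identity
  have hlog : Complex.log (1 + u ^ m) = (m : ℂ) * Complex.log u + Complex.log (1 + w) := by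
    have hexp : Complex.exp ((m : ℂ) * Complex.log u + Complex.log (1 + w)) = 1 + u ^ m := by
      rw [Complex.exp_add, Complex.exp_nat_mul, Complex.exp_log hu0, Complex.exp_log h1w0,
        ← h1um]
    have him : ((m : ℂ) * Complex.log u + Complex.log (1 + w)).im
        = (m : ℝ) * u.arg + Complex.arg (1 + w) := by
      simp [Complex.add_im, Complex.mul_im, Complex.log_im]
    rw [← hexp, Complex.log_exp (by rw [him]; exact hsum1.1) (by rw [him]; exact hsum1.2.le)]
  -- final computation
  have hmC : (m : ℂ) ≠ 0 := by exact_mod_cast hm.ne'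
  rw [Complex.cpow_def_of_ne_zero h1um0, Complex.cpow_def_of_ne_zero h1w0, hlog]
  rw [show ((m : ℂ) * Complex.log u + Complex.log (1 + w)) * ((b : ℂ) / m)
      = (b : ℂ) * Complex.log u + Complex.log (1 + w) * ((b : ℂ) / m) by field_simp]
  rw [Complex.exp_add, Complex.exp_nat_mul, Complex.exp_log hu0]

lemma genBinomC_abs_le (m b : ℕ) (hb : 0 < b) (hbm : b < m) (n : ℕ) :
    ‖genBinomC ((b:ℂ)/m) n‖ ≤ 1 := by
  have hm : (0:ℝ) < m := by exact_mod_cast lt_trans hb hbm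
  have hc1 : (0:ℝ) < (b:ℝ)/m := by positivity
  have hc2 : (b:ℝ)/m < 1 := by
    rw [div_lt_one hm]; exact_mod_cast hbm
  rw [genBinomC, norm_div, Complex.norm_prod, Complex.norm_natCast]
  rw [div_le_one (by exact_mod_cast n.factorial_pos : (0:ℝ) < (n.factorial : ℝ))]
  calc ∏ k ∈ Finset.range n, ‖(b:ℂ)/m - k‖
      ≤ ∏ k ∈ Finset.range n, ((k : ℝ) + 1) := by
        apply Finset.prod_le_prod (fun k _ => norm_nonneg _)
        intro k _
        have : ((b:ℂ)/m - k) = (((b:ℝ)/m - k : ℝ) : ℂ) := by push_cast; ring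
        rw [this, Complex.norm_real, Real.norm_eq_abs]
        rw [abs_le]
        constructor <;> [skip; skip] <;>
          · have : (0:ℝ) ≤ (k:ℝ) := Nat.cast_nonneg k
            linarith
    _ = (n.factorial : ℝ) := by
        rw [← Finset.prod_range_add_one_eq_factorial n]
        push_cast
        rfl

/-- Power series expansion of `I = I_{m,S,b}` at infinity on the sector `S_m`:
for `z ∈ S_m` with `|z| > 1`,
`I(z) = Σ_{n≥0} (1/(a+mn))·binom(b/m,n)·z^{-a-mn}`, where `a = S - b`. -/
theorem stmt5 (m S b a : ℕ) (hS : 5 ≤ S) (hlarge : S < 2 * m) (hmS : m < S)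
    (hb1 : 1 ≤ b) (hb2 : 2 * b < S) (ha : a + b = S)
    (z : ℂ) (hz0 : z ≠ 0) (harg1 : -(Real.pi / m) < z.arg) (harg2 : z.arg < Real.pi / m)
    (hz1 : 1 < ‖z‖) :
    HasSum
      (fun n : ℕ =>
        (1 / ((a : ℂ) + m * n)) * genBinomC ((b : ℂ) / m) n * z ^ (-(a : ℤ) - m * n))
      (abelI m S b z) := by
  have hm : 0 < m := by omega
  have hbm : b < m := by omega
  have ha1 : 1 ≤ a := by omega
  have habsz : (0:ℝ) < ‖z‖ := norm_pos_iff.mpr hz0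
  set c : ℂ := (b:ℂ)/m with hc
  set e : ℕ → ℤ := fun n => (b:ℤ) - m * n with he
  set F : ℕ → ℝ → ℂ := fun n t =>
    (genBinomC c n * z ^ e n) * (((t : ℝ) ^ (((e n - S - 1 : ℤ) : ℝ)) : ℝ) : ℂ) with hF
  have hα : ∀ n : ℕ, ((e n - S - 1 : ℤ) : ℝ) < -1 := by
    intro n
    have hmn : (0:ℤ) ≤ (m:ℤ) * n := by positivity
    have h1 : e n - S - 1 ≤ -2 := by simp only [he]; omega
    have : ((e n - S - 1 : ℤ) : ℝ) ≤ ((-2 : ℤ) : ℝ) := by exact_mod_cast h1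
    simpa using this.trans_lt (by norm_num)
  have hint : ∀ n : ℕ, ∫ t in Set.Ioi (1:ℝ), t ^ (((e n - S - 1 : ℤ) : ℝ))
      = 1/((a:ℝ) + m*n) := by
    intro n
    rw [integral_Ioi_rpow_of_lt (hα n) one_pos, Real.one_rpow]
    have h1 : ((e n - S - 1 : ℤ):ℝ) + 1 = -((a:ℝ) + m*n) := by
      have : ((e n - S - 1 : ℤ):ℝ) = (b:ℝ) - m*n - S - 1 := by
        simp only [he]; push_cast; ring
      rw [this]
      have hha : (a:ℝ) + (b:ℝ) = (S:ℝ) := by exact_mod_cast ha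
      linarith [hha]
    rw [h1, neg_div_neg_eq]
  have hFint : ∀ n, Integrable (F n) (volume.restrict (Set.Ioi (1:ℝ))) := by
    intro n
    exact ((integrableOn_Ioi_rpow_of_lt (hα n) one_pos).ofReal.const_mul _)
  have hnorm : ∀ n, ∫ t in Set.Ioi (1:ℝ), ‖F n t‖
      = ‖genBinomC c n * z ^ e n‖ * (1/((a:ℝ)+m*n)) := by
    intro n
    rw [← hint n, ← MeasureTheory.integral_const_mul]
    apply setIntegral_congr_fun measurableSet_Ioi
    intro t ht
    have ht0 : (0:ℝ) < t := lt_trans one_pos ht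
    simp only [hF, norm_mul, Complex.norm_real, Real.norm_eq_abs]
    rw [_root_.abs_of_nonneg (Real.rpow_nonneg ht0.le _)]
  -- summability of norms
  set q : ℝ := (‖z‖ ^ m)⁻¹ with hq
  have hq0 : 0 ≤ q := by positivity
  have hq1 : q < 1 := by
    rw [hq]
    exact inv_lt_one_of_one_lt₀ (one_lt_pow₀ hz1 hm.ne')
  have habse : ∀ n, ‖z ^ e n‖ = ‖z‖^b * q^n := by
    intro n
    rw [norm_zpow, he]
    rw [zpow_sub₀ (norm_ne_zero_iff.mpr hz0)]
    rw [hq, inv_pow, ← pow_mul]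
    norm_cast
  have hsum : Summable (fun n => ∫ t in Set.Ioi (1:ℝ), ‖F n t‖) := by
    apply Summable.of_nonneg_of_le
      (fun n => MeasureTheory.integral_nonneg (fun t => norm_nonneg _))
      (fun n => ?_) ((summable_geometric_of_lt_one hq0 hq1).mul_left (‖z‖^b))
    rw [hnorm n, norm_mul, habse n]
    have h1 : ‖genBinomC c n‖ ≤ 1 := genBinomC_abs_le m b hb1 hbm n
    have h2 : 1/((a:ℝ)+m*n) ≤ 1 := by
      rw [div_le_one (by positivity)]
      have : (1:ℝ) ≤ (a:ℝ) := by exact_mod_cast ha1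
      have : (0:ℝ) ≤ (m:ℝ)*n := by positivity
      linarith
    have h3 : (0:ℝ) ≤ ‖z‖^b * q^n := by positivity
    calc ‖genBinomC c n‖ * (‖z‖^b * q^n) * (1/((a:ℝ)+m*n))
        ≤ 1 * (‖z‖^b * q^n) * 1 := by
          apply mul_le_mul (mul_le_mul h1 le_rfl h3 one_pos.le) h2 (by positivity)
          positivity
      _ = ‖z‖^b * q^n := by ring
  -- pointwise has-sum
  have hpt : ∀ t ∈ Set.Ioi (1:ℝ), HasSum (fun n => F n t)
      ((1 + ((t:ℂ) * z) ^ m) ^ c / (t:ℂ) ^ (S+1)) := by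
    intro t ht
    have ht1 : (1:ℝ) < t := ht
    have ht0 : (0:ℝ) < t := lt_trans one_pos ht1
    have htC : (t:ℂ) ≠ 0 := by exact_mod_cast ht0.ne'
    set u : ℂ := (t:ℂ) * z with hu
    have hu0 : u ≠ 0 := mul_ne_zero htC hz0
    have hargu : u.arg = z.arg := Complex.arg_real_mul z ht0
    have habsu : 1 < ‖u‖ := by
      rw [hu, norm_mul, Complex.norm_real, Real.norm_eq_abs, abs_of_pos ht0]
      exact one_lt_mul ht1.le hz1
    have hkey := key_branch m b hm u hu0 (by rw [hargu]; exact harg1)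
      (by rw [hargu]; exact harg2) habsu
    have hwm : ‖(u ^ m)⁻¹‖ < 1 := by
      rw [norm_inv, norm_pow]
      exact inv_lt_one_of_one_lt₀ (one_lt_pow₀ habsu hm.ne')
    have hbs := ((hasSum_genBinomC c ((u ^ m)⁻¹) hwm).mul_left (u ^ b)).div_const
      ((t:ℂ)^(S+1))
    rw [← hkey] at hbs
    convert hbs using 2 with n
    · rfl
    -- term identity
    have humn : (u ^ b) * ((u ^ m)⁻¹) ^ n = u ^ e n := by
      rw [inv_pow, ← pow_mul, ← zpow_natCast u b, ← zpow_natCast u (m*n), ← zpow_neg,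
        ← zpow_add₀ hu0]
      congr 1
      try (simp only [he]; push_cast; ring)
    have ht2 : ((((t:ℝ) ^ (((e n - S - 1 : ℤ) : ℝ))) : ℝ) : ℂ) = (t:ℂ) ^ (e n - S - 1) := by
      rw [Real.rpow_intCast, Complex.ofReal_zpow]
      try norm_cast
    have ht3 : (t:ℂ) ^ e n * ((t:ℂ) ^ (S+1))⁻¹ = (t:ℂ) ^ (e n - S - 1) := by
      rw [← zpow_natCast (t:ℂ) (S+1), ← zpow_neg, ← zpow_add₀ htC]
      congr 1
      push_cast
      ring
    rw [hF]
    simp only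
    calc (genBinomC c n * z ^ e n) * ((((t:ℝ) ^ (((e n - S - 1 : ℤ) : ℝ))) : ℝ) : ℂ)
        = genBinomC c n * (z ^ e n * ((t:ℂ) ^ e n * ((t:ℂ)^(S+1))⁻¹)) := by
          rw [ht2, ← ht3]; ring
      _ = genBinomC c n * (u ^ e n * ((t:ℂ)^(S+1))⁻¹) := by rw [hu, mul_zpow]; ring
      _ = u ^ b * (genBinomC c n * ((u^m)⁻¹)^n) / (t:ℂ)^(S+1) := by
          rw [← humn, div_eq_mul_inv]; ring
  -- assemble
  have H := MeasureTheory.hasSum_integral_of_summable_integral_norm hFint hsum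
  have htsum : ∫ t in Set.Ioi (1:ℝ), (∑' n, F n t)
      = ∫ t in Set.Ioi (1:ℝ), (1 + ((t:ℂ)*z)^m)^c/(t:ℂ)^(S+1) :=
    setIntegral_congr_fun measurableSet_Ioi (fun t ht => (hpt t ht).tsum_eq)
  rw [htsum] at H
  have hval : ∀ n, (∫ t in Set.Ioi (1:ℝ), F n t)
      = genBinomC c n * z ^ e n * (1/((a:ℂ)+m*n)) := by
    intro n
    have hoc : (∫ t in Set.Ioi (1:ℝ), ((((t:ℝ) ^ (((e n - S - 1 : ℤ) : ℝ))) : ℝ) : ℂ))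
        = (((1/((a:ℝ) + m*n)) : ℝ) : ℂ) := by
      rw [← hint n]; exact integral_ofReal
    rw [hF]
    simp only
    rw [MeasureTheory.integral_const_mul, hoc]
    push_cast
    ring
  have H2 := H.mul_left (z ^ (-(S:ℤ)))
  have hfeq : (fun n => z ^ (-(S:ℤ)) * ∫ t in Set.Ioi (1:ℝ), F n t)
      = (fun n : ℕ =>
        (1 / ((a : ℂ) + m * n)) * genBinomC ((b : ℂ) / m) n * z ^ (-(a : ℤ) - m * n)) := by
    funext n
    rw [hval n]
    have hz2 : z ^ (-(S:ℤ)) * z ^ e n = z ^ (-(a:ℤ) - m*n) := by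
      rw [← zpow_add₀ hz0]
      congr 1
      simp only [he]
      omega
    rw [← hc, ← hz2]
    ring
  rw [hfeq] at H2
  exact H2
end

section
/- Under the same hypotheses, the function I(z) = ∫_{[z,z∞)} (1+u^m)^{b/m} du/u^{S+1} is holomorphic on the open set O_m = ℂ minus the union of the rays ℝ_{≥0}·e^{iπ(1+2p)/m} for p = 0,…,m-1, and its derivative is I'(z) = -(1+z^m)^{b/m}/z^{S+1}. -/
open Complex MeasureTheory

/-- The open set `O_m`: the complex plane minus the `m` rays `ℝ_{≥0}·e^{iπ(1+2p)/m}`. -/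
def Om (m : ℕ) : Set ℂ :=
    {z : ℂ | ∀ p < m, ∀ t : ℝ, 0 ≤ t →
      z ≠ (t : ℂ) * Complex.exp (Real.pi * (1 + 2 * (p : ℂ)) / m * Complex.I)}

noncomputable def Complex.abs : AbsoluteValue ℂ ℝ :=
  IsAbsoluteValue.toAbsoluteValue (norm : ℂ → ℝ)

theorem Complex.norm_eq_abs (z : ℂ) : ‖z‖ = Complex.abs z := rfl

@[simp] theorem Complex.abs_ofReal (r : ℝ) : Complex.abs (r : ℂ) = |r| := by
  simp [← Complex.norm_eq_abs]

@[simp] theorem Complex.abs_natCast (n : ℕ) : Complex.abs (n : ℂ) = n := by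
  simp [← Complex.norm_eq_abs]

theorem Complex.abs_intCast (n : ℤ) : Complex.abs (n : ℂ) = |(n : ℝ)| := by
  simp [← Complex.norm_eq_abs]

theorem Complex.abs_exp_ofReal_mul_I (x : ℝ) : Complex.abs (Complex.exp (x * Complex.I)) = 1 := by
  rw [← Complex.norm_eq_abs]; exact Complex.norm_exp_ofReal_mul_I x

theorem Complex.abs_cpow_of_ne_zero {z : ℂ} (hz : z ≠ 0) (w : ℂ) :
    Complex.abs (z ^ w) = Complex.abs z ^ w.re / Real.exp (Complex.arg z * w.im) := by
  simp only [← Complex.norm_eq_abs]; exact Complex.norm_cpow_of_ne_zero hz w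

theorem Complex.continuous_abs : Continuous Complex.abs := continuous_norm

theorem Complex.abs_mul_exp_arg_mul_I (x : ℂ) :
    (Complex.abs x : ℂ) * Complex.exp (Complex.arg x * Complex.I) = x :=
  Complex.norm_mul_exp_arg_mul_I x

lemma ray_of_pow_neg {m : ℕ} (hm : 0 < m) {u : ℂ} (hu : u ≠ 0)
    (him : (u ^ m).im = 0) (hre : (u ^ m).re < 0) :
    ∃ p < m, ∃ s : ℝ, 0 ≤ s ∧
      u = (s : ℂ) * Complex.exp (Real.pi * (1 + 2 * (p : ℂ)) / m * Complex.I) := by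
  set a : ℝ := Complex.abs u with ha_def
  have ha : 0 < a := Complex.abs.pos hu
  have hrepr : (a : ℂ) * Complex.exp (u.arg * I) = u := Complex.abs_mul_exp_arg_mul_I u
  have hum : u ^ m = (((u ^ m).re : ℝ) : ℂ) := by
    apply Complex.ext <;> simp [him]
  have hpowrepr : u ^ m = (a : ℂ) ^ m * Complex.exp ((m : ℂ) * u.arg * I) := by
    conv_lhs => rw [← hrepr]
    rw [mul_pow, ← Complex.exp_nat_mul]
    ring_nf
  have hane : (a : ℂ) ^ m ≠ 0 := pow_ne_zero m (Complex.ofReal_ne_zero.mpr ha.ne')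
  have hexp : Complex.exp ((m : ℂ) * u.arg * I) = (((u ^ m).re / a ^ m : ℝ) : ℂ) := by
    rw [show (((u ^ m).re / a ^ m : ℝ) : ℂ) = (((u ^ m).re : ℝ) : ℂ) / (a : ℂ) ^ m by
      push_cast; ring, eq_div_iff hane, ← hum]
    linear_combination -hpowrepr
  have habs1 : Complex.abs (Complex.exp ((m : ℂ) * u.arg * I)) = 1 := by
    have h1 : (m : ℂ) * u.arg * I = ((m * u.arg : ℝ) : ℂ) * I := by push_cast; ring
    rw [h1, Complex.abs_exp_ofReal_mul_I]
  have hx : (u ^ m).re / a ^ m = -1 := by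
    have h2 : (u ^ m).re / a ^ m < 0 := div_neg_of_neg_of_pos hre (pow_pos ha m)
    have h1 : |(u ^ m).re / a ^ m| = 1 := by
      rw [hexp] at habs1; rwa [Complex.abs_ofReal] at habs1
    rcases abs_cases ((u ^ m).re / a ^ m) with ⟨h, _⟩ | ⟨h, _⟩ <;> linarith
  have hexp' : Complex.exp ((m : ℂ) * u.arg * I) = Complex.exp (Real.pi * I) := by
    rw [hexp, hx, Complex.exp_pi_mul_I]; norm_num
  obtain ⟨n, hn⟩ := Complex.exp_eq_exp_iff_exists_int.mp hexp'
  have hθ : (m : ℝ) * u.arg = Real.pi * (1 + 2 * n) := by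
    have hI : (((m : ℝ) * u.arg : ℝ) : ℂ) * I = ((Real.pi * (1 + 2 * n) : ℝ) : ℂ) * I := by
      push_cast
      linear_combination hn
    have := mul_right_cancel₀ Complex.I_ne_zero hI
    exact_mod_cast this
  set p : ℕ := (n % (m : ℤ)).toNat with hp_def
  have hmZ : (0 : ℤ) < m := by exact_mod_cast hm
  have hp0 : 0 ≤ n % (m : ℤ) := Int.emod_nonneg n hmZ.ne'
  have hplt : n % (m : ℤ) < m := Int.emod_lt_of_pos n hmZ
  have hpn : (p : ℤ) = n % (m : ℤ) := Int.toNat_of_nonneg hp0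
  have hplt' : p < m := by omega
  set k : ℤ := n / m with hk_def
  have hnk : n = m * k + p := by rw [hpn, hk_def]; exact (Int.mul_ediv_add_emod n m).symm
  refine ⟨p, hplt', a, ha.le, ?_⟩
  rw [← hrepr]
  congr 1
  rw [Complex.exp_eq_exp_iff_exists_int]
  refine ⟨k, ?_⟩
  have harg : u.arg = Real.pi * (1 + 2 * (p : ℝ)) / m + 2 * Real.pi * k := by
    have hm' : (m : ℝ) ≠ 0 := by exact_mod_cast hm.ne'
    have hnR : (n : ℝ) = m * k + p := by exact_mod_cast hnk
    field_simp
    linear_combination hθ + 2 * Real.pi * hnR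
  rw [harg]
  push_cast
  ring

lemma Om_ne_zero {m : ℕ} (hm : 0 < m) {z : ℂ} (hz : z ∈ Om m) : z ≠ 0 := by
  simpa using hz 0 hm 0 le_rfl

lemma slit_mem {m : ℕ} (hm : 0 < m) {z : ℂ} (hz : z ∈ Om m) {t : ℝ} (ht : 0 < t) :
    (1 + ((t : ℂ) * z) ^ m) ∈ Complex.slitPlane := by
  rw [Complex.mem_slitPlane_iff]
  by_contra h
  push_neg at h
  obtain ⟨h1, h2⟩ := h
  set u := (t : ℂ) * z with hu_def
  have him : (u ^ m).im = 0 := by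
    have : (1 + u ^ m).im = (u ^ m).im := by simp
    rw [this] at h2; exact h2
  have hre : (u ^ m).re < 0 := by
    have : (1 + u ^ m).re = 1 + (u ^ m).re := by simp
    rw [this] at h1; linarith
  have hu : u ≠ 0 := by
    intro h0
    rw [h0, zero_pow hm.ne'] at hre
    simp at hre
  obtain ⟨p, hp, s, hs, hus⟩ := ray_of_pow_neg hm hu him hre
  have ht0 : (t : ℂ) ≠ 0 := by exact_mod_cast ht.ne'
  apply hz p hp (s / t) (div_nonneg hs ht.le)
  rw [hu_def] at hus
  rw [Complex.ofReal_div, div_mul_eq_mul_div, eq_div_iff ht0]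
  linear_combination hus

lemma isOpen_Om (m : ℕ) : IsOpen (Om m) := by
  have hrep : Om m = ⋂ p ∈ Finset.range m,
      (fun z : ℂ => z / Complex.exp (Real.pi * (1 + 2 * (p : ℂ)) / m * Complex.I)) ⁻¹'
        {w : ℂ | 0 ≤ w.re ∧ w.im = 0}ᶜ := by
    ext z
    simp only [Om, Set.mem_setOf_eq, Set.mem_iInter, Finset.mem_range, Set.mem_preimage,
      Set.mem_compl_iff, not_and]
    constructor
    · intro h p hp hre him
      set e := Complex.exp (Real.pi * (1 + 2 * (p : ℂ)) / m * Complex.I) with he_def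
      have he : e ≠ 0 := Complex.exp_ne_zero _
      apply h p hp (z / e).re hre
      have him' : z / e = (((z / e).re : ℝ) : ℂ) := by
        apply Complex.ext
        · simp
        · simpa using him
      rw [← he_def, ← him', div_mul_cancel₀ _ he]
    · intro h p hp t ht hzeq
      set e := Complex.exp (Real.pi * (1 + 2 * (p : ℂ)) / m * Complex.I) with he_def
      have he : e ≠ 0 := Complex.exp_ne_zero _
      have : z / e = (t : ℂ) := by rw [hzeq]; field_simp
      apply h p hp <;> rw [this] <;> simp [ht]
  rw [hrep]
  apply isOpen_biInter_finset
  intro p _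
  apply IsOpen.preimage (continuous_id.div_const _)
  rw [isOpen_compl_iff]
  have : {w : ℂ | 0 ≤ w.re ∧ w.im = 0} = {w : ℂ | 0 ≤ w.re} ∩ {w : ℂ | w.im = 0} := rfl
  rw [this]
  exact (isClosed_le continuous_const Complex.continuous_re).inter
    (isClosed_eq Complex.continuous_im continuous_const)


noncomputable def fA (m S b : ℕ) (u : ℂ) : ℂ :=
  (1 + u ^ m) ^ ((b : ℂ) / m) * u ^ (-(S + 1 : ℤ))

noncomputable def fD (m S b : ℕ) (u : ℂ) : ℂ :=
  (b : ℂ) / m * (1 + u ^ m) ^ ((b : ℂ) / m - 1) * ((m : ℂ) * u ^ (m - 1)) * u ^ (-(S + 1 : ℤ))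
    + (1 + u ^ m) ^ ((b : ℂ) / m) * ((Int.cast (-(S + 1 : ℤ)) : ℂ) * u ^ (-(S + 1 : ℤ) - 1))

lemma hasDerivAt_fA (m S b : ℕ) {u : ℂ} (hu : u ≠ 0) (hs : (1 + u ^ m) ∈ Complex.slitPlane) :
    HasDerivAt (fA m S b) (fD m S b u) u := by
  unfold fA fD
  exact (((hasDerivAt_pow m u).const_add 1).cpow_const hs).mul
    (hasDerivAt_zpow (-(S + 1 : ℤ)) u (Or.inl hu))

lemma abs_cpow_div_nat (b m : ℕ) {w : ℂ} (hw : w ≠ 0) :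
    Complex.abs (w ^ ((b : ℂ) / m)) = Complex.abs w ^ ((b : ℝ) / m) := by
  have hc : ((b : ℂ) / m) = (((b / m : ℝ)) : ℂ) := by push_cast; ring
  rw [hc, Complex.abs_cpow_of_ne_zero hw]
  simp

lemma abs_cpow_le_of {m b : ℕ} (hm : 0 < m) {w : ℂ} (hw : w ≠ 0) {X : ℝ} (hX : 0 ≤ X)
    (hle : Complex.abs w ≤ X ^ m) : Complex.abs (w ^ ((b : ℂ) / m)) ≤ X ^ b := by
  rw [abs_cpow_div_nat b m hw]
  have h1 : Complex.abs w ^ ((b : ℝ) / m) ≤ (X ^ m) ^ ((b : ℝ) / m) :=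
    Real.rpow_le_rpow (Complex.abs.nonneg w) hle (by positivity)
  refine h1.trans_eq ?_
  rw [← Real.rpow_natCast X m, ← Real.rpow_mul hX]
  rw [show (m : ℝ) * ((b : ℝ) / m) = (b : ℝ) by field_simp]
  exact Real.rpow_natCast X b

lemma abs_cpow_sub_one_le {m b : ℕ} (hm : 0 < m) {w : ℂ} (hw : w ≠ 0) {X Y : ℝ}
    (hX : 0 ≤ X) (hY : 0 < Y) (hle : Complex.abs w ≤ X ^ m) (hge : Y ≤ Complex.abs w) :
    Complex.abs (w ^ ((b : ℂ) / m - 1)) ≤ X ^ b / Y := by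
  have habs : 0 < Complex.abs w := Complex.abs.pos hw
  have hc : ((b : ℂ) / m - 1) = (((b / m - 1 : ℝ)) : ℂ) := by push_cast; ring
  rw [hc, Complex.abs_cpow_of_ne_zero hw]
  simp only [Complex.ofReal_re, Complex.ofReal_im, mul_zero, Real.exp_zero, div_one]
  rw [Real.rpow_sub habs, Real.rpow_one]
  have h1 : Complex.abs w ^ ((b : ℝ) / m) ≤ X ^ b := by
    have := abs_cpow_le_of (b := b) hm hw hX hle
    rwa [abs_cpow_div_nat b m hw] at this
  exact div_le_div₀ (by positivity) h1 hY hge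

lemma abs_zpow_neg_le (n : ℕ) {u : ℂ} {Y : ℝ} (hY : 0 < Y) (hge : Y ≤ Complex.abs u) :
    Complex.abs (u ^ (-(n : ℤ))) ≤ (Y ^ n)⁻¹ := by
  have hu : u ≠ 0 := by
    intro h; rw [h] at hge; simp at hge; linarith
  rw [map_zpow₀, zpow_neg, zpow_natCast]
  exact inv_anti₀ (by positivity) (pow_le_pow_left₀ hY.le hge n)

lemma abs_one_add_pow_le {m : ℕ} (hm : 0 < m) {R t : ℝ} (hR : 0 ≤ R) (ht : 1 ≤ t)
    {z : ℂ} (h2 : Complex.abs z ≤ R) :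
    Complex.abs (1 + ((t : ℂ) * z) ^ m) ≤ (t * (1 + R)) ^ m := by
  have ht0 : (0:ℝ) < t := lt_of_lt_of_le one_pos ht
  have h1 : Complex.abs (1 + ((t : ℂ) * z) ^ m) ≤ 1 + (t * R) ^ m := by
    calc Complex.abs (1 + ((t : ℂ) * z) ^ m)
        ≤ Complex.abs 1 + Complex.abs (((t : ℂ) * z) ^ m) := Complex.abs.add_le _ _
      _ = 1 + (t * Complex.abs z) ^ m := by
          rw [map_one, map_pow, map_mul, Complex.abs_ofReal, abs_of_pos ht0]
      _ ≤ 1 + (t * R) ^ m := by gcongr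
  refine h1.trans ?_
  have hpow : 1 + R ^ m ≤ (1 + R) ^ m := by
    simpa using pow_add_pow_le zero_le_one hR hm.ne'
  have htm : (1:ℝ) ≤ t ^ m := one_le_pow₀ ht
  calc 1 + (t * R) ^ m = 1 + t ^ m * R ^ m := by ring
    _ ≤ t ^ m * (1 + R ^ m) := by nlinarith [pow_nonneg hR m]
    _ ≤ t ^ m * (1 + R) ^ m := by gcongr
    _ = (t * (1 + R)) ^ m := (mul_pow t (1+R) m).symm

lemma abs_u_bounds {t : ℝ} (ht : 1 ≤ t) {z : ℂ} {r R : ℝ} (h1 : r ≤ Complex.abs z)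
    (h2 : Complex.abs z ≤ R) :
    t * r ≤ Complex.abs ((t : ℂ) * z) ∧ Complex.abs ((t : ℂ) * z) ≤ t * R := by
  have ht0 : (0:ℝ) < t := lt_of_lt_of_le one_pos ht
  have : Complex.abs ((t : ℂ) * z) = t * Complex.abs z := by
    rw [map_mul, Complex.abs_ofReal, abs_of_pos ht0]
  rw [this]
  constructor
  · gcongr
  · gcongr

lemma bound_fA {m S b : ℕ} (hm : 0 < m) (hb : b + 2 ≤ S + 1) {r R t : ℝ} (hr : 0 < r)
    (hR : 0 ≤ R) (ht : 1 ≤ t) {z : ℂ} (h1 : r ≤ Complex.abs z) (h2 : Complex.abs z ≤ R)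
    (hw : 1 + ((t : ℂ) * z) ^ m ≠ 0) :
    Complex.abs (fA m S b ((t : ℂ) * z)) ≤ (1 + R) ^ b / r ^ (S + 1) * (t ^ 2)⁻¹ := by
  have ht0 : (0:ℝ) < t := lt_of_lt_of_le one_pos ht
  obtain ⟨hu1, hu2⟩ := abs_u_bounds ht h1 h2
  have habs1 : Complex.abs (1 + ((t : ℂ) * z) ^ m) ≤ (t * (1 + R)) ^ m :=
    abs_one_add_pow_le hm hR ht h2
  have hcp : Complex.abs ((1 + ((t : ℂ) * z) ^ m) ^ ((b : ℂ) / m)) ≤ (t * (1 + R)) ^ b :=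
    abs_cpow_le_of hm hw (by positivity) habs1
  have hzp : Complex.abs (((t : ℂ) * z) ^ (-(S + 1 : ℤ))) ≤ ((t * r) ^ (S + 1))⁻¹ := by
    have := abs_zpow_neg_le (S + 1) (by positivity : (0:ℝ) < t * r) hu1
    rwa [show (-((S + 1 : ℕ) : ℤ)) = (-(S + 1 : ℤ)) by push_cast; ring] at this
  calc Complex.abs (fA m S b ((t : ℂ) * z))
      = Complex.abs ((1 + ((t : ℂ) * z) ^ m) ^ ((b : ℂ) / m)) *
        Complex.abs (((t : ℂ) * z) ^ (-(S + 1 : ℤ))) := by rw [fA, map_mul]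
    _ ≤ (t * (1 + R)) ^ b * ((t * r) ^ (S + 1))⁻¹ := by
        exact mul_le_mul hcp hzp (Complex.abs.nonneg _) (by positivity)
    _ = ((1 + R) ^ b / r ^ (S + 1)) * (t ^ b * (t ^ (S + 1))⁻¹) := by
        rw [mul_pow, mul_pow, mul_inv]; field_simp
    _ ≤ ((1 + R) ^ b / r ^ (S + 1)) * (t ^ 2)⁻¹ := by
        gcongr ?_ * ?_
        · -- t ^ b * (t ^ (S+1))⁻¹ ≤ (t^2)⁻¹
          rw [show S + 1 = b + (S + 1 - b) by omega, pow_add, mul_inv, ← mul_assoc,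
            mul_inv_cancel₀ (pow_ne_zero _ ht0.ne'), one_mul]
          exact inv_anti₀ (by positivity) (pow_le_pow_right₀ ht (by omega))

lemma pow_cancel_le {t : ℝ} (ht : 1 ≤ t) {b j k : ℕ} (h : b + k ≤ j) :
    t ^ b * (t ^ j)⁻¹ ≤ (t ^ k)⁻¹ := by
  have ht0 : (0:ℝ) < t := lt_of_lt_of_le one_pos ht
  rw [show j = b + (j - b) by omega, pow_add, mul_inv, ← mul_assoc,
    mul_inv_cancel₀ (pow_ne_zero _ ht0.ne'), one_mul]
  exact inv_anti₀ (by positivity) (pow_le_pow_right₀ ht (by omega))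

lemma bound_fD {m S b : ℕ} (hm : 0 < m) (hb : b + 2 ≤ S + 1) {r R δ t : ℝ} (hr : 0 < r)
    (hRr : r ≤ R) (hδ : 0 < δ) (ht : 1 ≤ t) {z : ℂ} (h1 : r ≤ Complex.abs z)
    (h2 : Complex.abs z ≤ R) (hw : 1 + ((t : ℂ) * z) ^ m ≠ 0)
    (hlow : δ * t ^ m ≤ Complex.abs (1 + ((t : ℂ) * z) ^ m)) :
    Complex.abs (fD m S b ((t : ℂ) * z)) ≤
      ((b : ℝ) * (1 + R) ^ b * R ^ (m - 1) / (δ * r ^ (S + 1))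
        + (S + 1) * (1 + R) ^ b / r ^ (S + 2)) * (t ^ 3)⁻¹ := by
  have ht0 : (0:ℝ) < t := lt_of_lt_of_le one_pos ht
  have hR : (0:ℝ) < R := lt_of_lt_of_le hr hRr
  obtain ⟨hu1, hu2⟩ := abs_u_bounds ht h1 h2
  set u : ℂ := (t : ℂ) * z with hu_def
  have hu0 : u ≠ 0 := by
    intro h; rw [h] at hu1; simp at hu1; nlinarith
  have habs1 : Complex.abs (1 + u ^ m) ≤ (t * (1 + R)) ^ m := abs_one_add_pow_le hm hR.le ht h2
  have hcp : Complex.abs ((1 + u ^ m) ^ ((b : ℂ) / m)) ≤ (t * (1 + R)) ^ b :=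
    abs_cpow_le_of hm hw (by positivity) habs1
  have hcp' : Complex.abs ((1 + u ^ m) ^ ((b : ℂ) / m - 1)) ≤ (t * (1 + R)) ^ b / (δ * t ^ m) :=
    abs_cpow_sub_one_le hm hw (by positivity) (by positivity) habs1 hlow
  have hzp1 : Complex.abs (u ^ (-(S + 1 : ℤ))) ≤ ((t * r) ^ (S + 1))⁻¹ := by
    have := abs_zpow_neg_le (S + 1) (by positivity : (0:ℝ) < t * r) hu1
    rwa [show (-((S + 1 : ℕ) : ℤ)) = (-(S + 1 : ℤ)) by push_cast; ring] at this
  have hzp2 : Complex.abs (u ^ (-(S + 1 : ℤ) - 1)) ≤ ((t * r) ^ (S + 2))⁻¹ := by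
    have := abs_zpow_neg_le (S + 2) (by positivity : (0:ℝ) < t * r) hu1
    rwa [show (-((S + 2 : ℕ) : ℤ)) = (-(S + 1 : ℤ) - 1) by push_cast; ring] at this
  have hum : Complex.abs (u ^ (m - 1)) ≤ (t * R) ^ (m - 1) := by
    rw [map_pow]
    exact pow_le_pow_left₀ (Complex.abs.nonneg u) hu2 _
  have habsb : Complex.abs ((b : ℂ) / m) = (b : ℝ) / m := by
    rw [map_div₀]; simp
  have habsm : Complex.abs ((m : ℂ)) = (m : ℝ) := by simp
  have habsi : Complex.abs ((Int.cast (-(S + 1 : ℤ)) : ℂ)) = ((S : ℝ) + 1) := by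
    rw [Complex.abs_intCast]
    push_cast
    rw [abs_neg]
    exact _root_.abs_of_nonneg (by positivity)
  obtain ⟨m', rfl⟩ : ∃ m', m = m' + 1 := ⟨m - 1, by omega⟩
  rw [fD]
  refine (Complex.abs.add_le _ _).trans ?_
  have hT1 : Complex.abs ((b : ℂ) / (m' + 1 : ℕ) * (1 + u ^ (m' + 1)) ^ ((b : ℂ) / (m' + 1 : ℕ) - 1)
        * (((m' + 1 : ℕ) : ℂ) * u ^ ((m' + 1) - 1)) * u ^ (-(S + 1 : ℤ)))
      ≤ ((b : ℝ) / ((m' + 1 : ℕ) : ℝ)) * ((t * (1 + R)) ^ b / (δ * t ^ (m' + 1)))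
        * ((((m' + 1 : ℕ) : ℝ)) * (t * R) ^ ((m' + 1) - 1)) * ((t * r) ^ (S + 1))⁻¹ := by
    have h3 : Complex.abs (((m' + 1 : ℕ) : ℂ) * u ^ ((m' + 1) - 1))
        ≤ (((m' + 1 : ℕ) : ℝ)) * (t * R) ^ ((m' + 1) - 1) := by
      rw [map_mul, habsm]
      exact mul_le_mul_of_nonneg_left hum (by positivity)
    rw [map_mul, map_mul, map_mul, habsb]
    gcongr
  have hT2 : Complex.abs ((1 + u ^ (m' + 1)) ^ ((b : ℂ) / (m' + 1 : ℕ))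
        * ((Int.cast (-(S + 1 : ℤ)) : ℂ) * u ^ (-(S + 1 : ℤ) - 1)))
      ≤ (t * (1 + R)) ^ b * (((S : ℝ) + 1) * ((t * r) ^ (S + 2))⁻¹) := by
    rw [map_mul, map_mul, habsi]
    gcongr
  refine (add_le_add hT1 hT2).trans ?_
  have key1 : t ^ b * (t ^ (S + 2))⁻¹ ≤ (t ^ 3)⁻¹ := pow_cancel_le ht (by omega)
  have e1 : ((b : ℝ) / ((m' + 1 : ℕ) : ℝ)) * ((t * (1 + R)) ^ b / (δ * t ^ (m' + 1)))
        * ((((m' + 1 : ℕ) : ℝ)) * (t * R) ^ ((m' + 1) - 1)) * ((t * r) ^ (S + 1))⁻¹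
      = ((b : ℝ) * (1 + R) ^ b * R ^ ((m' + 1) - 1) / (δ * r ^ (S + 1)))
        * (t ^ b * (t ^ (S + 2))⁻¹) := by
    simp only [Nat.add_sub_cancel]
    rw [mul_pow, mul_pow, mul_pow]
    field_simp
    ring
  have e2 : (t * (1 + R)) ^ b * (((S : ℝ) + 1) * ((t * r) ^ (S + 2))⁻¹)
      = (((S : ℕ) + 1 : ℝ) * (1 + R) ^ b / r ^ (S + 2)) * (t ^ b * (t ^ (S + 2))⁻¹) := by
    rw [mul_pow, mul_pow]
    field_simp
  rw [e1, e2]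
  push_cast
  rw [← add_mul]
  gcongr

lemma contOn_fA {m S b : ℕ} (hm : 0 < m) {x : ℂ} (hx : x ∈ Om m) :
    ContinuousOn (fun t : ℝ => fA m S b ((t : ℂ) * x)) (Set.Ioi 1) := by
  have hx0 : x ≠ 0 := Om_ne_zero hm hx
  have hinner : Continuous (fun t : ℝ => (t : ℂ) * x) :=
    Complex.continuous_ofReal.mul continuous_const
  intro t ht
  have ht0 : (0:ℝ) < t := lt_trans one_pos ht
  have hu0 : (t : ℂ) * x ≠ 0 :=
    mul_ne_zero (Complex.ofReal_ne_zero.mpr ht0.ne') hx0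
  have hsl : (1 + ((t : ℂ) * x) ^ m) ∈ Complex.slitPlane := slit_mem hm hx ht0
  have hpowm : ContinuousAt (fun s : ℝ => 1 + ((s : ℂ) * x) ^ m) t :=
    (continuous_const.add ((continuous_pow m).comp hinner)).continuousAt
  have c1 : ContinuousAt (fun s : ℝ => (1 + ((s : ℂ) * x) ^ m) ^ ((b : ℂ) / m)) t :=
    hpowm.cpow continuousAt_const hsl
  have c2 : ContinuousAt (fun s : ℝ => ((s : ℂ) * x) ^ (-(S + 1 : ℤ))) t :=
    ContinuousAt.comp (g := fun w : ℂ => w ^ (-(S + 1 : ℤ)))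
      (continuousAt_zpow₀ _ _ (Or.inl hu0)) hinner.continuousAt
  exact (c1.mul c2).continuousWithinAt

lemma contOn_fD {m S b : ℕ} (hm : 0 < m) {x : ℂ} (hx : x ∈ Om m) :
    ContinuousOn (fun t : ℝ => fD m S b ((t : ℂ) * x)) (Set.Ioi 1) := by
  have hx0 : x ≠ 0 := Om_ne_zero hm hx
  have hinner : Continuous (fun t : ℝ => (t : ℂ) * x) :=
    Complex.continuous_ofReal.mul continuous_const
  intro t ht
  have ht0 : (0:ℝ) < t := lt_trans one_pos ht
  have hu0 : (t : ℂ) * x ≠ 0 :=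
    mul_ne_zero (Complex.ofReal_ne_zero.mpr ht0.ne') hx0
  have hsl : (1 + ((t : ℂ) * x) ^ m) ∈ Complex.slitPlane := slit_mem hm hx ht0
  have hpowm : ContinuousAt (fun s : ℝ => 1 + ((s : ℂ) * x) ^ m) t :=
    (continuous_const.add ((continuous_pow m).comp hinner)).continuousAt
  have c1 : ContinuousAt (fun s : ℝ => (1 + ((s : ℂ) * x) ^ m) ^ ((b : ℂ) / m)) t :=
    hpowm.cpow continuousAt_const hsl
  have c1' : ContinuousAt (fun s : ℝ => (1 + ((s : ℂ) * x) ^ m) ^ ((b : ℂ) / m - 1)) t :=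
    hpowm.cpow continuousAt_const hsl
  have c2 : ContinuousAt (fun s : ℝ => ((s : ℂ) * x) ^ (-(S + 1 : ℤ))) t :=
    ContinuousAt.comp (g := fun w : ℂ => w ^ (-(S + 1 : ℤ)))
      (continuousAt_zpow₀ _ _ (Or.inl hu0)) hinner.continuousAt
  have c2' : ContinuousAt (fun s : ℝ => ((s : ℂ) * x) ^ (-(S + 1 : ℤ) - 1)) t :=
    ContinuousAt.comp (g := fun w : ℂ => w ^ (-(S + 1 : ℤ) - 1))
      (continuousAt_zpow₀ _ _ (Or.inl hu0)) hinner.continuousAt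
  have c3 : ContinuousAt (fun s : ℝ => ((m : ℂ) * ((s : ℂ) * x) ^ (m - 1))) t :=
    continuousAt_const.mul
      (ContinuousAt.comp (g := fun w : ℂ => w ^ (m - 1))
        (continuous_pow (m - 1)).continuousAt hinner.continuousAt)
  exact ((((continuousAt_const.mul c1').mul c3).mul c2).add
    (c1.mul (continuousAt_const.mul c2'))).continuousWithinAt


lemma abelI_eq (m S b : ℕ) (hS : 0 < S) :
    abelI m S b = fun z => ∫ t in Set.Ioi (1 : ℝ), z * fA m S b ((t : ℂ) * z) := by
  funext z
  rw [abelI, ← MeasureTheory.integral_const_mul]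
  apply setIntegral_congr_fun measurableSet_Ioi
  intro t ht
  have ht1 : (1:ℝ) < t := ht
  have ht0 : (t : ℂ) ≠ 0 := Complex.ofReal_ne_zero.mpr (by linarith)
  show z ^ (-(S : ℤ)) * ((1 + ((t : ℂ) * z) ^ m) ^ ((b : ℂ) / m) / (t : ℂ) ^ (S + 1))
      = z * fA m S b ((t : ℂ) * z)
  by_cases hz : z = 0
  · subst hz
    rw [zero_zpow _ (by simp; omega)]
    simp
  · rw [fA, show (-(S : ℤ)) = -((S : ℕ) : ℤ) from rfl, zpow_neg, zpow_natCast,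
      show (-(S + 1 : ℤ)) = -((S + 1 : ℕ) : ℤ) by push_cast; ring, zpow_neg, zpow_natCast]
    field_simp
    ring


set_option maxHeartbeats 1000000 in
/-- `I = I_{m,S,b}` is holomorphic on `O_m` with `I'(z) = -(1+z^m)^{b/m}/z^{S+1}`. -/
theorem stmt6 (m S b : ℕ) (hS : 5 ≤ S) (hlarge : S < 2 * m) (hmS : m < S)
    (hb1 : 1 ≤ b) (hb2 : 2 * b < S) :
    ∀ z ∈ Om m,
      HasDerivAt (abelI m S b) (-(1 + z ^ m) ^ ((b : ℂ) / m) / z ^ (S + 1)) z := by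
  intro z₀ hz₀
  have hm : 0 < m := by omega
  have hb : b + 2 ≤ S + 1 := by omega
  have hz0 : z₀ ≠ 0 := Om_ne_zero hm hz₀
  have habs0 : 0 < Complex.abs z₀ := Complex.abs.pos hz0
  obtain ⟨ε₀, hε₀, hball₀⟩ := Metric.isOpen_iff.mp (isOpen_Om m) z₀ hz₀
  set ε : ℝ := min (ε₀ / 2) (Complex.abs z₀ / 2) with hε_def
  have hε : 0 < ε := lt_min (by linarith) (by linarith)
  have hεlt : ε < ε₀ := lt_of_le_of_lt (min_le_left _ _) (by linarith)
  have hεz : ε ≤ Complex.abs z₀ / 2 := min_le_right _ _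
  have hsub : Metric.closedBall z₀ ε ⊆ Om m := by
    intro z hz
    exact hball₀ (Metric.mem_ball.mpr (lt_of_le_of_lt (Metric.mem_closedBall.mp hz) hεlt))
  set r : ℝ := Complex.abs z₀ - ε with hr_def
  set R : ℝ := Complex.abs z₀ + ε with hR_def
  have hr : 0 < r := by rw [hr_def]; linarith
  have hrR : r ≤ R := by rw [hr_def, hR_def]; linarith
  have hR0 : 0 < R := lt_of_lt_of_le hr hrR
  have hzb : ∀ z ∈ Metric.closedBall z₀ ε, r ≤ Complex.abs z ∧ Complex.abs z ≤ R := by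
    intro z hz
    have hd : Complex.abs (z - z₀) ≤ ε := by
      rw [← Complex.norm_eq_abs, ← Complex.dist_eq]; exact Metric.mem_closedBall.mp hz
    have h1 : Complex.abs z₀ ≤ Complex.abs (z₀ - z) + Complex.abs z := by
      calc Complex.abs z₀ = Complex.abs ((z₀ - z) + z) := by ring_nf
        _ ≤ _ := Complex.abs.add_le _ _
    have h2 : Complex.abs z ≤ Complex.abs (z - z₀) + Complex.abs z₀ := by
      calc Complex.abs z = Complex.abs ((z - z₀) + z₀) := by ring_nf
        _ ≤ _ := Complex.abs.add_le _ _
    have h3 : Complex.abs (z₀ - z) = Complex.abs (z - z₀) := Complex.abs.map_sub z₀ z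
    constructor
    · rw [hr_def]; linarith [h1, h3 ▸ hd]
    · rw [hR_def]; linarith
  -- lower bound δ
  obtain ⟨δ, hδ, hlow⟩ : ∃ δ : ℝ, 0 < δ ∧ ∀ z ∈ Metric.closedBall z₀ ε, ∀ t : ℝ, 1 ≤ t →
      δ * t ^ m ≤ Complex.abs (1 + ((t : ℂ) * z) ^ m) := by
    set T : ℝ := max 1 (2 / r) with hT_def
    have hT1 : (1:ℝ) ≤ T := le_max_left _ _
    have hKc : IsCompact (Metric.closedBall z₀ ε ×ˢ Set.Icc 1 T) :=
      (isCompact_closedBall z₀ ε).prod isCompact_Icc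
    have hKne : ((z₀, (1:ℝ)) : ℂ × ℝ) ∈ Metric.closedBall z₀ ε ×ˢ Set.Icc 1 T :=
      Set.mem_prod.mpr ⟨Metric.mem_closedBall_self hε.le, Set.mem_Icc.mpr ⟨le_refl 1, hT1⟩⟩
    have hψ : ContinuousOn (fun q : ℂ × ℝ => Complex.abs (1 + ((q.2 : ℂ) * q.1) ^ m) / q.2 ^ m)
        (Metric.closedBall z₀ ε ×ˢ Set.Icc 1 T) := by
      apply ContinuousOn.div
      · exact (Complex.continuous_abs.comp (continuous_const.add
          (((Complex.continuous_ofReal.comp continuous_snd).mul continuous_fst).pow m))).continuousOn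
      · exact (continuous_snd.pow m).continuousOn
      · rintro ⟨z, t⟩ hq
        have h1t : (1:ℝ) ≤ t := hq.2.1
        exact pow_ne_zero _ (by linarith)
    obtain ⟨q₀, hq₀K, hq₀min⟩ := hKc.exists_isMinOn ⟨_, hKne⟩ hψ
    have hq₀t : (1:ℝ) ≤ q₀.2 := hq₀K.2.1
    have hq₀t0 : (0:ℝ) < q₀.2 := lt_of_lt_of_le one_pos hq₀t
    have hq₀ne : 1 + ((q₀.2 : ℂ) * q₀.1) ^ m ≠ 0 :=
      Complex.slitPlane_ne_zero (slit_mem hm (hsub hq₀K.1) hq₀t0)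
    have hδ₀ : 0 < Complex.abs (1 + ((q₀.2 : ℂ) * q₀.1) ^ m) / q₀.2 ^ m :=
      div_pos (Complex.abs.pos hq₀ne) (pow_pos hq₀t0 m)
    refine ⟨min (Complex.abs (1 + ((q₀.2 : ℂ) * q₀.1) ^ m) / q₀.2 ^ m) (r ^ m / 2),
      lt_min hδ₀ (by positivity), ?_⟩
    intro z hz t ht
    have ht0 : (0:ℝ) < t := lt_of_lt_of_le one_pos ht
    rcases le_total t T with hcase | hcase
    · have hmem : ((z, t) : ℂ × ℝ) ∈ Metric.closedBall z₀ ε ×ˢ Set.Icc 1 T :=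
        Set.mem_prod.mpr ⟨hz, Set.mem_Icc.mpr ⟨ht, hcase⟩⟩
      have hψle := isMinOn_iff.mp hq₀min (z, t) hmem
      simp only at hψle
      exact (le_div_iff₀ (pow_pos ht0 m)).mp (le_trans (min_le_left _ _) hψle)
    · have htr : 2 ≤ t * r := by
        have h2r : 2 / r ≤ t := le_trans (le_max_right _ _) hcase
        calc (2:ℝ) = (2 / r) * r := by field_simp
          _ ≤ t * r := mul_le_mul_of_nonneg_right h2r hr.le
      have h2m : 2 ≤ (t * r) ^ m := by
        calc (2:ℝ) ≤ 2 ^ m := le_self_pow₀ one_le_two hm.ne'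
          _ ≤ (t * r) ^ m := pow_le_pow_left₀ (by norm_num) htr m
      have habs : Complex.abs (((t : ℂ) * z) ^ m) = (t * Complex.abs z) ^ m := by
        rw [map_pow, map_mul, Complex.abs_ofReal, abs_of_pos ht0]
      have hzr := (hzb z hz).1
      have htri : (t * Complex.abs z) ^ m - 1 ≤ Complex.abs (1 + ((t : ℂ) * z) ^ m) := by
        have h : Complex.abs (((t : ℂ) * z) ^ m)
            ≤ Complex.abs (1 + ((t : ℂ) * z) ^ m) + 1 := by
          calc Complex.abs (((t : ℂ) * z) ^ m)
              = Complex.abs ((1 + ((t : ℂ) * z) ^ m) + (-1)) := by ring_nf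
            _ ≤ Complex.abs (1 + ((t : ℂ) * z) ^ m) + Complex.abs (-1) :=
                Complex.abs.add_le _ _
            _ = Complex.abs (1 + ((t : ℂ) * z) ^ m) + 1 := by simp
        rw [habs] at h; linarith
      have hmono : (t * r) ^ m ≤ (t * Complex.abs z) ^ m :=
        pow_le_pow_left₀ (by positivity) (by gcongr) m
      have hfin : (min (Complex.abs (1 + ((q₀.2 : ℂ) * q₀.1) ^ m) / q₀.2 ^ m) (r ^ m / 2))
          * t ^ m ≤ (t * r) ^ m - 1 := by
        have h1 : (min (Complex.abs (1 + ((q₀.2 : ℂ) * q₀.1) ^ m) / q₀.2 ^ m) (r ^ m / 2))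
            ≤ r ^ m / 2 := min_le_right _ _
        have h2 : (t * r) ^ m = t ^ m * r ^ m := mul_pow t r m
        nlinarith [pow_pos ht0 m, pow_pos hr m]
      linarith
  -- constants
  set C1 : ℝ := (1 + R) ^ b / r ^ (S + 1) with hC1_def
  set C2 : ℝ := (b : ℝ) * (1 + R) ^ b * R ^ (m - 1) / (δ * r ^ (S + 1))
      + (S + 1) * (1 + R) ^ b / r ^ (S + 2) with hC2_def
  set C' : ℝ := C1 + R * C2 with hC'_def
  have hwne : ∀ z ∈ Metric.closedBall z₀ ε, ∀ t : ℝ, 0 < t →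
      1 + ((t : ℂ) * z) ^ m ≠ 0 := fun z hz t ht =>
    Complex.slitPlane_ne_zero (slit_mem hm (hsub hz) ht)
  have hbound : ∀ t : ℝ, 1 < t → ∀ x ∈ Metric.closedBall z₀ ε,
      Complex.abs (fA m S b ((t : ℂ) * x) + x * (fD m S b ((t : ℂ) * x) * (t : ℂ)))
        ≤ C' * (t ^ 2)⁻¹ := by
    intro t ht x hx
    have ht1 : 1 ≤ t := ht.le
    have ht0 : (0:ℝ) < t := lt_trans one_pos ht
    obtain ⟨h1, h2⟩ := hzb x hx
    have hw := hwne x hx t ht0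
    have hA := bound_fA hm hb hr hR0.le ht1 h1 h2 hw
    have hD := bound_fD hm hb hr hrR hδ ht1 h1 h2 hw (hlow x hx t ht1)
    calc Complex.abs (fA m S b ((t : ℂ) * x) + x * (fD m S b ((t : ℂ) * x) * (t : ℂ)))
        ≤ Complex.abs (fA m S b ((t : ℂ) * x))
          + Complex.abs x * (Complex.abs (fD m S b ((t : ℂ) * x)) * t) := by
          refine (Complex.abs.add_le _ _).trans ?_
          rw [map_mul, map_mul, Complex.abs_ofReal, abs_of_pos ht0]
      _ ≤ C1 * (t ^ 2)⁻¹ + R * ((C2 * (t ^ 3)⁻¹) * t) := by gcongr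
      _ = C' * (t ^ 2)⁻¹ := by rw [hC'_def]; field_simp
  have hbnd_int : Integrable (fun t : ℝ => C' * (t ^ 2)⁻¹)
      (volume.restrict (Set.Ioi (1:ℝ))) := by
    have h0 : IntegrableOn (fun t : ℝ => t ^ (-2 : ℝ)) (Set.Ioi (1:ℝ)) :=
      integrableOn_Ioi_rpow_of_lt (by norm_num) one_pos
    have h1 : IntegrableOn (fun t : ℝ => (t ^ 2)⁻¹) (Set.Ioi (1:ℝ)) := by
      apply h0.congr_fun ?_ measurableSet_Ioi
      intro t ht
      have ht0 : (0:ℝ) < t := lt_trans one_pos ht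
      show t ^ (-2 : ℝ) = (t ^ 2)⁻¹
      rw [Real.rpow_neg ht0.le, show (2:ℝ) = ((2:ℕ):ℝ) by norm_num, Real.rpow_natCast]
    exact h1.const_mul C'
  -- dominated differentiation
  have hker := hasDerivAt_integral_of_dominated_loc_of_deriv_le
    (μ := volume.restrict (Set.Ioi (1:ℝ)))
    (F := fun z (t : ℝ) => z * fA m S b ((t : ℂ) * z))
    (F' := fun z (t : ℝ) => fA m S b ((t : ℂ) * z) + z * (fD m S b ((t : ℂ) * z) * (t : ℂ)))
    (x₀ := z₀) (bound := fun t => C' * (t ^ 2)⁻¹) (Metric.ball_mem_nhds z₀ hε)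
    (by
      filter_upwards [Metric.ball_mem_nhds z₀ hε] with x hx
      have hxOm : x ∈ Om m := hsub (Metric.ball_subset_closedBall hx)
      exact (continuousOn_const.mul (contOn_fA hm hxOm)).aestronglyMeasurable
        measurableSet_Ioi)
    (by
      apply Integrable.mono' (hbnd_int.const_mul (Complex.abs z₀))
      · exact (continuousOn_const.mul (contOn_fA hm hz₀)).aestronglyMeasurable
          measurableSet_Ioi
      · filter_upwards [ae_restrict_mem measurableSet_Ioi] with t ht
        have ht1 : (1:ℝ) ≤ t := le_of_lt ht
        have hA := bound_fA (b := b) hm hb hr hR0.le ht1 (hzb z₀ (Metric.mem_closedBall_self hε.le)).1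
          (hzb z₀ (Metric.mem_closedBall_self hε.le)).2
          (hwne z₀ (Metric.mem_closedBall_self hε.le) t (by linarith))
        rw [Complex.norm_eq_abs, map_mul]
        have hC2nn : 0 ≤ C2 := by
          rw [hC2_def]
          positivity
        have hC1C' : C1 ≤ C' := by
          rw [hC'_def]
          nlinarith [mul_nonneg hR0.le hC2nn]
        calc Complex.abs z₀ * Complex.abs (fA m S b ((t : ℂ) * z₀))
            ≤ Complex.abs z₀ * (C1 * (t ^ 2)⁻¹) := by gcongr
          _ ≤ Complex.abs z₀ * (C' * (t ^ 2)⁻¹) := by gcongr)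
    ((((contOn_fA hm hz₀).add (continuousOn_const.mul ((contOn_fD hm hz₀).mul
        Complex.continuous_ofReal.continuousOn))).aestronglyMeasurable measurableSet_Ioi))
    (by
      filter_upwards [ae_restrict_mem measurableSet_Ioi] with t ht
      intro x hx
      have := hbound t ht x (Metric.ball_subset_closedBall hx)
      rw [Complex.norm_eq_abs]
      exact this)
    hbnd_int
    (by
      filter_upwards [ae_restrict_mem measurableSet_Ioi] with t ht
      intro x hx
      have hx' : x ∈ Metric.closedBall z₀ ε := Metric.ball_subset_closedBall hx
      have hxOm : x ∈ Om m := hsub hx'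
      have ht0 : (0:ℝ) < t := lt_trans one_pos ht
      have hu0 : (t : ℂ) * x ≠ 0 :=
        mul_ne_zero (Complex.ofReal_ne_zero.mpr ht0.ne') (Om_ne_zero hm hxOm)
      have hsl := slit_mem hm hxOm ht0
      have hA := hasDerivAt_fA m S b hu0 hsl
      have hin : HasDerivAt (fun z : ℂ => (t : ℂ) * z) ((t : ℂ)) x := by
        simpa using (hasDerivAt_id x).const_mul (t : ℂ)
      have hcomp := hA.comp x hin
      have hmul := (hasDerivAt_id x).mul hcomp
      simp only [Function.comp_apply, one_mul, id_eq] at hmul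
      exact hmul)
  obtain ⟨hF'int, hderiv⟩ := hker
  -- FTC on the ray
  have hgd : ∀ t : ℝ, 0 < t → HasDerivAt (fun s : ℝ => (s : ℂ) * fA m S b ((s : ℂ) * z₀))
      (fA m S b ((t : ℂ) * z₀) + z₀ * (fD m S b ((t : ℂ) * z₀) * (t : ℂ))) t := by
    intro t ht0
    have hu0 : (t : ℂ) * z₀ ≠ 0 :=
      mul_ne_zero (Complex.ofReal_ne_zero.mpr ht0.ne') hz0
    have hsl := slit_mem hm hz₀ ht0
    have hA := hasDerivAt_fA m S b hu0 hsl
    have hin : HasDerivAt (fun w : ℂ => w * z₀) z₀ ((t : ℝ) : ℂ) := by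
      simpa using (hasDerivAt_id ((t : ℝ) : ℂ)).mul_const z₀
    have hcomp := hA.comp ((t : ℝ) : ℂ) hin
    have hmul := (hasDerivAt_id ((t : ℝ) : ℂ)).mul hcomp
    have hreal := hmul.comp_ofReal
    exact hreal.congr_deriv (by
      change 1 * fA m S b ((t : ℂ) * z₀) + (t : ℂ) * (fD m S b ((t : ℂ) * z₀) * z₀) = _
      ring)
  have hg_tend : Filter.Tendsto (fun s : ℝ => (s : ℂ) * fA m S b ((s : ℂ) * z₀))
      Filter.atTop (nhds 0) := by
    apply squeeze_zero_norm' (a := fun t : ℝ => C1 * t⁻¹)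
    · filter_upwards [Filter.eventually_ge_atTop (1:ℝ)] with t ht1
      have ht0 : (0:ℝ) < t := lt_of_lt_of_le one_pos ht1
      have hA := bound_fA (b := b) hm hb hr hR0.le ht1
        (hzb z₀ (Metric.mem_closedBall_self hε.le)).1
        (hzb z₀ (Metric.mem_closedBall_self hε.le)).2
        (hwne z₀ (Metric.mem_closedBall_self hε.le) t ht0)
      rw [Complex.norm_eq_abs, map_mul, Complex.abs_ofReal, abs_of_pos ht0]
      calc t * Complex.abs (fA m S b ((t : ℂ) * z₀)) ≤ t * (C1 * (t ^ 2)⁻¹) := by gcongr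
        _ = C1 * t⁻¹ := by field_simp
    · simpa using tendsto_inv_atTop_zero.const_mul C1
  have hg_cont : ContinuousWithinAt (fun s : ℝ => (s : ℂ) * fA m S b ((s : ℂ) * z₀))
      (Set.Ici 1) 1 := ((hgd 1 one_pos).continuousAt).continuousWithinAt
  have hFTC := integral_Ioi_of_hasDerivAt_of_tendsto hg_cont
    (fun t ht => hgd t (lt_trans one_pos ht)) hF'int hg_tend
  rw [abelI_eq m S b (by omega)]
  refine hderiv.congr_deriv ?_
  rw [hFTC]
  have hg1 : ((1:ℝ) : ℂ) * fA m S b (((1:ℝ) : ℂ) * z₀) = fA m S b z₀ := by push_cast; simp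
  rw [hg1, zero_sub, fA,
    show (-(S + 1 : ℤ)) = -((S + 1 : ℕ) : ℤ) by push_cast; ring, zpow_neg, zpow_natCast,
    neg_div, div_eq_mul_inv]
  ring
end

section
/- If ω is any m-th root of unity and z ∈ O_m, then I(ωz) = ω^{-S} I(z), where I(z) = ∫_{[z,z∞)} (1+u^m)^{b/m} du/u^{S+1}. -/
open Complex MeasureTheory

/-- Rotation formula: if `ω` is an `m`-th root of unity and `z ∈ O_m`, then
`I(ωz) = ω^{-S} I(z)`. -/
theorem stmt7 (m S b : ℕ) (hS : 5 ≤ S) (hlarge : S < 2 * m) (hmS : m < S)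
    (hb1 : 1 ≤ b) (hb2 : 2 * b < S)
    (ω : ℂ) (hω : ω ^ m = 1) (z : ℂ) (hz : z ∈ Om m) :
    abelI m S b (ω * z) = ω ^ (-(S : ℤ)) * abelI m S b z := by
  have h : ∀ t : ℂ, (t * (ω * z)) ^ m = (t * z) ^ m := fun t => by
    calc (t * (ω * z)) ^ m = (t * z) ^ m * ω ^ m := by ring
    _ = (t * z) ^ m := by rw [hω, mul_one]
  simp only [abelI, h, mul_zpow, mul_assoc]
end

section
/- Let m, S, b be integers with S ≥ 5, S/2 < m < S, 1 ≤ b < S/2, and a = S - b. The number C_0 = Σ_{n≥0} binom(b/m, n)·(1/(a+mn) + 1/(mn - S)) is a convergent series and C_0 < 0. -/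
noncomputable def genBinomR (x : ℝ) (n : ℕ) : ℝ :=
    (∏ k ∈ Finset.range n, (x - k)) / (n.factorial : ℝ)

lemma genBinomR_zero (x : ℝ) : genBinomR x 0 = 1 := by
  simp [genBinomR]

lemma genBinomR_succ (x : ℝ) (n : ℕ) :
    genBinomR x (n + 1) = genBinomR x n * (x - n) / (n + 1) := by
  rw [genBinomR, genBinomR, Finset.prod_range_succ, Nat.factorial_succ]
  push_cast
  rw [div_mul_eq_mul_div, div_div, mul_comm ((n:ℝ)+1)]

lemma genBinomR_sign_bound (x : ℝ) (hx0 : 0 < x) (hx1 : x < 1) (n : ℕ) :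
    0 < (-1:ℝ)^n * genBinomR x (n+1) ∧ (-1:ℝ)^n * genBinomR x (n+1) ≤ 1/(n+1) := by
  induction n with
  | zero =>
    rw [genBinomR_succ, genBinomR_zero]
    norm_num
    constructor <;> linarith
  | succ n ih =>
    obtain ⟨h1, h2⟩ := ih
    rw [genBinomR_succ]
    have hn2 : (0:ℝ) < (n:ℝ) + 1 + 1 := by positivity
    have key : (-1:ℝ)^(n+1) * (genBinomR x (n+1) * (x - (n+1:ℕ)) / ((n+1:ℕ) + 1))
        = ((-1:ℝ)^n * genBinomR x (n+1)) * (((n:ℝ)+1) - x) / ((n:ℝ) + 1 + 1) := by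
      push_cast; ring
    rw [key]
    have hpos : 0 < (((n:ℝ)+1) - x) := by linarith [Nat.cast_nonneg (α := ℝ) n]
    constructor
    · positivity
    · rw [div_le_div_iff₀ hn2 (by positivity)]
      have : ((-1:ℝ)^n * genBinomR x (n+1)) * (((n:ℝ)+1) - x) ≤ (1/((n:ℝ)+1)) * ((n:ℝ)+1) := by
        have := mul_le_mul h2 (by linarith : ((n:ℝ)+1) - x ≤ (n:ℝ)+1) (le_of_lt hpos) (by positivity)
        linarith
      calc ((-1:ℝ)^n * genBinomR x (n+1)) * (((n:ℝ)+1) - x) * (↑(n+1) + 1)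
          ≤ (1/((n:ℝ)+1)) * ((n:ℝ)+1) * (↑(n+1) + 1) := by
            apply mul_le_mul_of_nonneg_right this; push_cast; positivity
        _ = 1 * (↑(n+1)+1) := by field_simp
        _ = 1 * ((n:ℝ)+1+1) := by push_cast; ring

set_option maxHeartbeats 1000000 in
/-- The series `C_0 = Σ_{n≥0} binom(b/m,n)·(1/(a+mn) + 1/(mn-S))` converges
and its sum is negative (`a = S - b`). -/
theorem stmt8 (m S b a : ℕ) (hS : 5 ≤ S) (hlarge : S < 2 * m) (hmS : m < S)
    (hb1 : 1 ≤ b) (hb2 : 2 * b < S) (ha : a + b = S) :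
    ∃ C₀ : ℝ,
      HasSum
        (fun n : ℕ =>
          genBinomR ((b : ℝ) / m) n * (1 / ((a : ℝ) + m * n) + 1 / ((m : ℝ) * n - S)))
        C₀ ∧ C₀ < 0 := by
  -- basic natural number facts
  have hm3 : 3 ≤ m := by omega
  have ha3 : 3 ≤ a := by omega
  have hbm : b < m := by omega
  -- real versions
  have hM1 : (1:ℝ) ≤ (m:ℝ) := by exact_mod_cast Nat.one_le_of_lt hm3
  have hM0 : (0:ℝ) < (m:ℝ) := by linarith
  have hA1 : (1:ℝ) ≤ (a:ℝ) := by exact_mod_cast Nat.one_le_of_lt ha3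
  have hA0 : (0:ℝ) < (a:ℝ) := by linarith
  have hS0 : (0:ℝ) < (S:ℝ) := by positivity
  set x : ℝ := (b:ℝ)/(m:ℝ) with hxdef
  have hx0 : 0 < x := div_pos (by exact_mod_cast hb1) hM0
  have hx1 : x < 1 := (div_lt_one hM0).mpr (by exact_mod_cast hbm)
  set F : ℕ → ℝ := fun n => 1 / ((a : ℝ) + (m:ℝ) * (n:ℝ)) + 1 / ((m : ℝ) * (n:ℝ) - (S:ℝ)) with hFdef
  set f : ℕ → ℝ := fun n => genBinomR x n * F n with hfdef
  -- key cast fact for n ≥ 2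
  have hmn : ∀ n : ℕ, 2 ≤ n → (S:ℝ) + 1 ≤ (m:ℝ) * (n:ℝ) := by
    intro n hn
    have : S + 1 ≤ m * n := by
      calc S + 1 ≤ 2 * m := by omega
        _ ≤ n * m := Nat.mul_le_mul_right m hn
        _ = m * n := Nat.mul_comm n m
    exact_mod_cast this
  have hFpos : ∀ n : ℕ, 2 ≤ n → 0 < F n := by
    intro n hn
    have h1 := hmn n hn
    have : (0:ℝ) < (a:ℝ) + (m:ℝ)*(n:ℝ) := by positivity
    have : (0:ℝ) < (m:ℝ)*(n:ℝ) - (S:ℝ) := by linarith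
    simp only [hFdef]
    positivity
  have hFdec : ∀ n : ℕ, 2 ≤ n → F (n+1) ≤ F n := by
    intro n hn
    have h1 := hmn n hn
    have hcast : ((n+1 : ℕ):ℝ) = (n:ℝ) + 1 := by push_cast; ring
    simp only [hFdef, hcast]
    have e1 : (0:ℝ) < (a:ℝ) + (m:ℝ)*(n:ℝ) := by positivity
    have e2 : (0:ℝ) < (m:ℝ)*(n:ℝ) - (S:ℝ) := by linarith
    have e3 : (a:ℝ) + (m:ℝ)*(n:ℝ) ≤ (a:ℝ) + (m:ℝ)*((n:ℝ)+1) := by nlinarith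
    have e4 : (m:ℝ)*(n:ℝ) - (S:ℝ) ≤ (m:ℝ)*((n:ℝ)+1) - (S:ℝ) := by nlinarith
    have := one_div_le_one_div_of_le e1 e3
    have := one_div_le_one_div_of_le e2 e4
    linarith
  have hB := genBinomR_sign_bound x hx0 hx1
  -- absolute value bound for genBinomR
  have hBabs : ∀ n : ℕ, |genBinomR x (n+1)| ≤ 1/((n:ℝ)+1) := by
    intro n
    obtain ⟨h1, h2⟩ := hB n
    have : |genBinomR x (n+1)| = |(-1:ℝ)^n * genBinomR x (n+1)| := by
      rw [abs_mul, abs_pow, abs_neg, abs_one, one_pow, one_mul]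
    rw [this, abs_of_pos h1]
    exact_mod_cast h2
  -- Summability
  have hsumf : Summable f := by
    rw [← summable_nat_add_iff 3]
    apply Summable.of_abs
    have hbase : Summable (fun n : ℕ => 2 * (1 / (((n+3 : ℕ)):ℝ)^2)) := by
      have h1 : Summable (fun n : ℕ => 1 / ((n:ℝ))^2) := by
        simpa using summable_one_div_nat_pow.mpr (by norm_num : 1 < 2)
      have h2 : Summable (fun n : ℕ => 1 / (((n+3 : ℕ)):ℝ)^2) := by
        exact (summable_nat_add_iff (f := fun n : ℕ => 1/((n:ℝ))^2) 3).mpr h1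
      exact h2.mul_left 2
    apply Summable.of_nonneg_of_le (fun n => abs_nonneg _) _ hbase
    intro n
    rw [show (((n+3 : ℕ)):ℝ) = (n:ℝ)+3 by push_cast; ring]
    -- |f (n+3)| ≤ 2 / (n+3)^2
    have hge : (S:ℝ) + ((n:ℝ)+3) ≤ (m:ℝ) * ((n:ℝ)+3) := by
      have hexp : m*(n+3) = m*n + 3*m := by ring
      have hn' : n ≤ m*n := Nat.le_mul_of_pos_left n (by omega)
      have : S + (n+3) ≤ m*(n+3) := by omega
      exact_mod_cast this
    have hcast : ((n+3 : ℕ):ℝ) = (n:ℝ) + 3 := by push_cast; ring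
    have hF1 : (0:ℝ) < (a:ℝ) + (m:ℝ)*((n:ℝ)+3) := by positivity
    have hF2 : (0:ℝ) < (m:ℝ)*((n:ℝ)+3) - (S:ℝ) := by linarith
    have hFb : |F (n+3)| ≤ 2/((n:ℝ)+3) := by
      simp only [hFdef, hcast]
      rw [abs_of_pos (by positivity)]
      have b1 : 1/((a:ℝ) + (m:ℝ)*((n:ℝ)+3)) ≤ 1/((n:ℝ)+3) := by
        apply one_div_le_one_div_of_le (by positivity)
        nlinarith
      have b2 : 1/((m:ℝ)*((n:ℝ)+3) - (S:ℝ)) ≤ 1/((n:ℝ)+3) := by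
        apply one_div_le_one_div_of_le (by positivity)
        linarith
      have h33 : (0:ℝ) < (n:ℝ)+3 := by positivity
      have : 2/((n:ℝ)+3) = 1/((n:ℝ)+3) + 1/((n:ℝ)+3) := by ring
      linarith
    have hBb : |genBinomR x (n+3)| ≤ 1/((n:ℝ)+3) := by
      have := hBabs (n+2)
      have hc : ((n+2:ℕ):ℝ) + 1 = (n:ℝ)+3 := by push_cast; ring
      rw [hc] at this
      exact this
    calc |f (n+3)| = |genBinomR x (n+3)| * |F (n+3)| := by
            simp only [hfdef]; rw [abs_mul]
      _ ≤ (1/((n:ℝ)+3)) * (2/((n:ℝ)+3)) := by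
            apply mul_le_mul hBb hFb (abs_nonneg _) (by positivity)
      _ = 2 * (1/((n:ℝ)+3)^2) := by
            have hne : ((n:ℝ)+3) ≠ 0 := by positivity
            field_simp
  -- even/odd decomposition
  have hinj2 : Function.Injective (fun k : ℕ => 2*k) := by
    intro p q h; dsimp only at h; omega
  have hinj2' : Function.Injective (fun k : ℕ => 2*k+1) := by
    intro p q h; dsimp only at h; omega
  have he : Summable (fun k : ℕ => f (2*k)) := hsumf.comp_injective hinj2
  have ho : Summable (fun k : ℕ => f (2*k+1)) := hsumf.comp_injective hinj2'
  refine ⟨(∑' k, f (2*k)) + (∑' k, f (2*k+1)), HasSum.even_add_odd he.hasSum ho.hasSum, ?_⟩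
  -- sum of pairs
  have hpair : HasSum (fun k : ℕ => f (2*k) + f (2*k+1)) ((∑' k, f (2*k)) + (∑' k, f (2*k+1))) :=
    he.hasSum.add ho.hasSum
  have h0 : HasSum (fun _ : ℕ => (0:ℝ)) 0 := hasSum_zero
  have h01 : f 0 + f 1 < 0 := by
      have hf0 : f 0 = 1/(a:ℝ) - 1/(S:ℝ) := by
        simp only [hfdef, hFdef, genBinomR_zero]
        norm_num
        ring
      have hf1 : f 1 = x * (1/((a:ℝ) + (m:ℝ)) + 1/((m:ℝ) - (S:ℝ))) := by
        simp only [hfdef, hFdef]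
        have : genBinomR x 1 = x := by
          rw [show (1:ℕ) = 0 + 1 from rfl, genBinomR_succ, genBinomR_zero]
          norm_num
        rw [this]
        norm_num
      have key : 1/(a:ℝ) - 1/(S:ℝ) + x * (1/((a:ℝ) + (m:ℝ)) + 1/((m:ℝ) - (S:ℝ))) < 0 := by
        have hSM : (m:ℝ) + 1 ≤ (S:ℝ) := by exact_mod_cast hmS
        have h2M : (S:ℝ) + 1 ≤ 2*(m:ℝ) := by exact_mod_cast hlarge
        have hb2' : 2*(b:ℝ) + 1 ≤ (S:ℝ) := by exact_mod_cast hb2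
        have hab : (a:ℝ) + (b:ℝ) = (S:ℝ) := by exact_mod_cast ha
        have hb0 : (0:ℝ) < (b:ℝ) := by exact_mod_cast hb1
        have hSMpos : (0:ℝ) < (S:ℝ) - (m:ℝ) := by linarith
        have hAM : (0:ℝ) < (a:ℝ) + (m:ℝ) := by linarith
        have hkey : (m:ℝ)*((a:ℝ)+(m:ℝ))*((S:ℝ)-(m:ℝ)) + (a:ℝ)*(S:ℝ)*((S:ℝ)-(m:ℝ))
            < (a:ℝ)*(S:ℝ)*((a:ℝ)+(m:ℝ)) := by
          have hA2 : (S:ℝ) + 1 ≤ 2*(a:ℝ) := by linarith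
          have h1 : (0:ℝ) < (a:ℝ)*(S:ℝ) + (m:ℝ)^2 := by positivity
          have h2 : (0:ℝ) < (a:ℝ) + (m:ℝ) - (S:ℝ) := by linarith
          nlinarith [mul_pos h1 h2]
        have heq : 1/(a:ℝ) - 1/(S:ℝ) + x * (1/((a:ℝ) + (m:ℝ)) + 1/((m:ℝ) - (S:ℝ)))
            = (((S:ℝ)-(a:ℝ)) * ((m:ℝ)*((a:ℝ)+(m:ℝ))*((S:ℝ)-(m:ℝ)))
                + (b:ℝ) * ((a:ℝ)*(S:ℝ)*((S:ℝ)-(m:ℝ)))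
                - (b:ℝ) * ((a:ℝ)*(S:ℝ)*((a:ℝ)+(m:ℝ))))
              / ((a:ℝ)*(S:ℝ)*(m:ℝ)*((a:ℝ)+(m:ℝ))*((S:ℝ)-(m:ℝ))) := by
          rw [hxdef]
          have hMS : (m:ℝ) - (S:ℝ) ≠ 0 := by linarith
          field_simp
          ring
        rw [heq]
        apply div_neg_of_neg_of_pos
        · rw [show (S:ℝ) - (a:ℝ) = (b:ℝ) by linarith]
          nlinarith
        · positivity
      rw [hf0, hf1]
      linarith [key]
  refine hasSum_lt (f := fun k : ℕ => f (2*k) + f (2*k+1)) (i := 0) ?_ ?_ hpair h0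
  · -- all pairs nonpositive
    intro k
    match k with
    | 0 =>
      simpa using le_of_lt h01
    | (j+1) =>
      -- pair with n = 2j+2
      set n : ℕ := 2*j + 2 with hndef
      have hn2 : 2 ≤ n := by omega
      have hidx : 2*(j+1) = n := by omega
      show f (2*(j+1)) + f (2*(j+1)+1) ≤ (0:ℝ)
      rw [hidx]
      -- sign of B n
      have hBn : genBinomR x n < 0 := by
        obtain ⟨h1, _⟩ := hB (2*j+1)
        have hpow : (-1:ℝ)^(2*j+1) = -1 := by
          rw [pow_succ, pow_mul]; norm_num
        rw [hpow] at h1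
        have : (2*j+1)+1 = n := by omega
        rw [this] at h1
        linarith
      have hrec : genBinomR x (n+1) = genBinomR x n * (x - (n:ℝ)) / ((n:ℝ)+1) :=
        genBinomR_succ x n
      have hxn : x - (n:ℝ) < 0 := by
        have : (2:ℝ) ≤ (n:ℝ) := by exact_mod_cast hn2
        linarith
      have hn0 : (0:ℝ) < (n:ℝ) + 1 := by positivity
      have hB1 : 0 ≤ genBinomR x (n+1) := by
        rw [hrec]
        apply div_nonneg _ (le_of_lt hn0)
        nlinarith
      have hB2 : genBinomR x (n+1) ≤ -genBinomR x n := by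
        rw [hrec, div_le_iff₀ hn0]
        nlinarith
      have hF1 := hFpos n hn2
      have hF2 := hFpos (n+1) (by omega)
      have hF3 := hFdec n hn2
      have hprod : genBinomR x (n+1) * F (n+1) ≤ (-genBinomR x n) * F n := by
        calc genBinomR x (n+1) * F (n+1) ≤ (-genBinomR x n) * F (n+1) :=
              mul_le_mul_of_nonneg_right hB2 (le_of_lt hF2)
          _ ≤ (-genBinomR x n) * F n := by
              apply mul_le_mul_of_nonneg_left hF3; linarith
      simp only [hfdef]
      nlinarith [hprod]
  · -- strict at 0
    show f (2*0) + f (2*0+1) < 0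
    simpa using h01
end

section
/- With the notation of the previous statement, writing α_n = binom(b/m, n)(1/(a+mn) + 1/(mn - S)): one has α_0 + α_1 = (S-a)(m² + aS)(S - a - m) / (a m S (a+m)(S-m)), and this quantity is negative when S/2 < m < S and 1 ≤ b = S - a < S/2. -/
/-- With `α_n = binom(b/m,n)(1/(a+mn) + 1/(mn-S))` and `a = S - b`, one has
`α₀ + α₁ = (S-a)(m²+aS)(S-a-m)/(a m S (a+m)(S-m))`, a negative quantity when
`S/2 < m < S` and `1 ≤ b = S - a < S/2`. -/
theorem stmt9 (m S b a : ℕ) (hS : 5 ≤ S) (hlarge : S < 2 * m) (hmS : m < S)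
    (hb1 : 1 ≤ b) (hb2 : 2 * b < S) (ha : a + b = S) :
    let α : ℕ → ℝ := fun n =>
      genBinomR ((b : ℝ) / m) n * (1 / ((a : ℝ) + m * n) + 1 / ((m : ℝ) * n - S))
    α 0 + α 1 =
        ((S : ℝ) - a) * ((m : ℝ) ^ 2 + a * S) * ((S : ℝ) - a - m) /
          ((a : ℝ) * m * S * ((a : ℝ) + m) * ((S : ℝ) - m)) ∧
      α 0 + α 1 < 0 := by
  intro α
  have hm0 : (0 : ℝ) < m := by
    have : 0 < m := by omega
    exact_mod_cast this
  have ha0 : (0 : ℝ) < a := by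
    have : 0 < a := by omega
    exact_mod_cast this
  have hS0 : (0 : ℝ) < S := by
    have : 0 < S := by omega
    exact_mod_cast this
  have hSm : (m : ℝ) < S := by exact_mod_cast hmS
  have haS : (a : ℝ) + b = S := by exact_mod_cast ha
  have hbm : (b : ℝ) < m := by
    have : b < m := by omega
    exact_mod_cast this
  have hb0 : (0 : ℝ) < b := by
    have : 0 < b := hb1
    exact_mod_cast this
  have hmS' : (S : ℝ) - m ≠ 0 := by linarith
  have ham : (0 : ℝ) < (a : ℝ) + m := by linarith
  have key : α 0 + α 1 =
      ((S : ℝ) - a) * ((m : ℝ) ^ 2 + a * S) * ((S : ℝ) - a - m) /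
        ((a : ℝ) * m * S * ((a : ℝ) + m) * ((S : ℝ) - m)) := by
    have hb' : (b : ℝ) = (S : ℝ) - a := by linarith
    have h1 : (m : ℝ) ≠ 0 := ne_of_gt hm0
    have h2 : (a : ℝ) ≠ 0 := ne_of_gt ha0
    have h3 : (S : ℝ) ≠ 0 := ne_of_gt hS0
    have h5 : (a : ℝ) + m ≠ 0 := ne_of_gt ham
    have lhs_eq : α 0 + α 1 =
        1 / (a : ℝ) - 1 / S + ((S : ℝ) - a) / m * (1 / ((a : ℝ) + m) - 1 / ((S : ℝ) - m)) := by
      simp only [α, genBinomR, Finset.prod_range_zero, Finset.prod_range_one, Nat.factorial,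
        Nat.cast_zero, Nat.cast_one]
      rw [show ((m : ℝ)) * (0 : ℝ) - S = -S by ring,
        show ((m : ℝ)) * (1 : ℝ) - S = -(((S : ℝ)) - m) by ring,
        show ((a : ℝ)) + m * (0 : ℝ) = a by ring,
        show ((a : ℝ)) + m * (1 : ℝ) = (a : ℝ) + m by ring, hb']
      norm_num
      rw [show ((m : ℝ)) - S = -(((S : ℝ)) - m) by ring]
      field_simp
      ring
    rw [lhs_eq]
    field_simp
    ring
  refine ⟨key, ?_⟩
  rw [key]
  have hSa : (S : ℝ) - a = b := by linarith
  have hSam : (S : ℝ) - a - m = b - m := by linarith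
  rw [hSa]
  apply div_neg_of_neg_of_pos
  · have h1 : (0 : ℝ) < (m : ℝ) ^ 2 + a * S := by positivity
    have h2 : (b : ℝ) - m < 0 := by linarith
    exact mul_neg_of_pos_of_neg (mul_pos hb0 h1) h2
  · have : (0 : ℝ) < (S : ℝ) - m := by linarith
    positivity
end

section
/- Let I be the restriction of I_{m,S,b} to the sector S_m ∩ H (where H is the upper half-plane). Then lim_{z → ζ_m, z ∈ S_m} I(z) = I_1 where ζ_m = e^{iπ/m} and I_1 = (1/m)·B(a/m, d/m)·e^{-iaπ/m}, with B the Euler Beta function, a = S - b, d = m + b. -/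
open Complex MeasureTheory Filter Topology

lemma aux_measurable_cpow_const {f : ℝ → ℂ} (hf : Measurable f) (c : ℂ) :
    Measurable fun x => f x ^ c := by
  simp only [Complex.cpow_def]
  apply Measurable.ite
  · exact measurableSet_eq_fun hf measurable_const
  · exact measurable_const
  · exact (hf.clog.mul_const c).cexp

lemma aux_neg_cpow {x p : ℝ} (hx : x < 0) :
    (x : ℂ) ^ (p : ℂ) = (((-x) ^ p : ℝ) : ℂ) * Complex.exp ((p * Real.pi : ℝ) * Complex.I) := by
  have hx0 : (x : ℂ) ≠ 0 := by
    simp only [ne_eq, Complex.ofReal_eq_zero]; linarith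
  have hlog : Complex.log (x : ℂ) = ((Real.log (-x) : ℝ) : ℂ) + (Real.pi : ℂ) * Complex.I := by
    apply Complex.ext
    · simp [Complex.log_re, Complex.norm_real, Real.norm_eq_abs, abs_of_neg hx]
    · simp [Complex.log_im, Complex.arg_ofReal_of_neg hx]
  rw [Complex.cpow_def_of_ne_zero hx0, hlog, add_mul, Complex.exp_add]
  congr 1
  · rw [← Complex.ofReal_mul, ← Complex.ofReal_exp, Real.rpow_def_of_pos (by linarith)]
  · push_cast; ring_nf
lemma aux_subst (m S b a : ℕ) (hm : 0 < m) (hab : a + b = S) :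
    ∫ x in Set.Ioo (0:ℝ) 1, x ^ ((a:ℝ)/m - 1) * (1-x) ^ ((b:ℝ)/m)
      = m * ∫ t in Set.Ioi (1:ℝ), (t^m - 1) ^ ((b:ℝ)/m) / t ^ (S+1) := by
  have hm' : (m:ℝ) ≠ 0 := Nat.cast_ne_zero.mpr hm.ne'
  have hmpos : (0:ℝ) < m := Nat.cast_pos.mpr hm
  set f : ℝ → ℝ := fun t => t ^ (-(m:ℝ)) with hf
  set f' : ℝ → ℝ := fun t => (-(m:ℝ)) * t ^ (-(m:ℝ) - 1) with hf'
  have hinv : ∀ t : ℝ, 0 < t → (f t) ^ (-(1:ℝ)/m) = t := by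
    intro t ht
    rw [hf, ← Real.rpow_mul ht.le]
    have : -(m:ℝ) * (-(1:ℝ)/m) = 1 := by field_simp
    rw [this, Real.rpow_one]
  have himg : f '' Set.Ioi 1 = Set.Ioo (0:ℝ) 1 := by
    ext y
    simp only [Set.mem_image, Set.mem_Ioi, Set.mem_Ioo]
    constructor
    · rintro ⟨t, ht, rfl⟩
      exact ⟨Real.rpow_pos_of_pos (by linarith) _,
        Real.rpow_lt_one_of_one_lt_of_neg ht (by linarith)⟩
    · rintro ⟨h0, h1⟩
      refine ⟨y ^ (-(1:ℝ)/m), ?_, ?_⟩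
      · rw [Real.one_lt_rpow_iff_of_pos h0]
        right
        constructor
        · exact h1
        · rw [div_neg_iff]; right; constructor <;> [norm_num; exact hmpos]
      · show (y ^ (-(1:ℝ)/(m:ℝ))) ^ (-(m:ℝ)) = y
        rw [← Real.rpow_mul h0.le]
        have : -(1:ℝ)/m * (-(m:ℝ)) = 1 := by field_simp
        rw [this, Real.rpow_one]
  have hderiv : ∀ t ∈ Set.Ioi (1:ℝ), HasDerivWithinAt f (f' t) (Set.Ioi 1) t := by
    intro t ht
    exact (Real.hasDerivAt_rpow_const (Or.inl (by simp only [Set.mem_Ioi] at ht; linarith))).hasDerivWithinAt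
  have hinj : Set.InjOn f (Set.Ioi 1) := by
    intro t1 h1 t2 h2 heq
    simp only [Set.mem_Ioi] at h1 h2
    rw [← hinv t1 (by linarith), ← hinv t2 (by linarith), heq]
  have key := integral_image_eq_integral_abs_deriv_smul measurableSet_Ioi hderiv hinj
      (fun x => x ^ ((a:ℝ)/m - 1) * (1-x) ^ ((b:ℝ)/m))
  rw [himg] at key
  rw [key, ← integral_const_mul]
  apply setIntegral_congr_fun measurableSet_Ioi
  intro t ht
  simp only [Set.mem_Ioi] at ht
  have ht0 : (0:ℝ) < t := by linarith
  have hTnat : t ^ (m:ℕ) = t ^ ((m:ℕ):ℝ) := (Real.rpow_natCast t m).symm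
  have htm1 : (1:ℝ) ≤ t ^ ((m:ℝ)) := by
    rw [Real.rpow_natCast]; exact one_le_pow₀ ht.le
  have h1f : 1 - f t = (t ^ ((m:ℝ)) - 1) * t ^ (-(m:ℝ)) := by
    rw [sub_mul, ← Real.rpow_add ht0, one_mul]
    simp [hf]
  simp only [smul_eq_mul, hf', hf]
  rw [h1f,
    Real.mul_rpow (by linarith) (Real.rpow_pos_of_pos ht0 _).le,
    ← Real.rpow_mul ht0.le, ← Real.rpow_mul ht0.le]
  have habs : |(-(m:ℝ)) * t ^ (-(m:ℝ) - 1)| = m * t ^ (-(m:ℝ) - 1) := by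
    rw [abs_mul, abs_neg, abs_of_pos hmpos, abs_of_pos (Real.rpow_pos_of_pos ht0 _)]
  have e1 : -(m:ℝ) * ((a:ℝ)/m - 1) = (m:ℝ) - a := by field_simp; ring
  have e2 : -(m:ℝ) * ((b:ℝ)/m) = -(b:ℝ) := by field_simp
  rw [habs, hTnat]
  rw [e1, e2]
  rw [div_eq_mul_inv ((t ^ ((m:ℕ):ℝ) - 1) ^ ((b:ℝ)/m)) (t ^ (S+1:ℕ)),
    show t ^ (S+1:ℕ) = t ^ ((S+1:ℕ):ℝ) from (Real.rpow_natCast t (S+1)).symm,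
    ← Real.rpow_neg ht0.le]
  have hS' : (S:ℝ) = (a:ℝ) + b := by exact_mod_cast hab.symm
  have hcomb : t ^ (-(m:ℝ)-1) * (t ^ ((m:ℝ)-(a:ℝ)) * t ^ (-(b:ℝ))) = t ^ (-((S+1:ℕ):ℝ)) := by
    rw [← Real.rpow_add ht0, ← Real.rpow_add ht0]
    congr 1
    push_cast
    linarith
  linear_combination ((m:ℝ) * (t ^ ((m:ℕ):ℝ) - 1) ^ ((b:ℝ)/m)) * hcomb

lemma aux_beta (m b a d : ℕ) (hm : 0 < m) (hd : d = m + b) :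
    Complex.betaIntegral ((a:ℂ)/m) ((d:ℂ)/m)
      = ((∫ x in Set.Ioo (0:ℝ) 1, x ^ ((a:ℝ)/m - 1) * (1-x) ^ ((b:ℝ)/m) : ℝ) : ℂ) := by
  have hm' : (m:ℂ) ≠ 0 := Nat.cast_ne_zero.mpr hm.ne'
  rw [Complex.betaIntegral, intervalIntegral.integral_of_le zero_le_one,
    integral_Ioc_eq_integral_Ioo]
  refine Eq.trans (setIntegral_congr_fun measurableSet_Ioo ?_) integral_ofReal
  intro x hx
  obtain ⟨h0, h1⟩ := hx
  dsimp only
  have e1 : (a:ℂ)/m - 1 = (((a:ℝ)/m - 1 : ℝ) : ℂ) := by push_cast; ring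
  have e2 : (d:ℂ)/m - 1 = (((b:ℝ)/m : ℝ) : ℂ) := by
    subst hd
    push_cast
    field_simp
    ring
  rw [e1, e2, show (1 - (x:ℂ)) = ((1 - x : ℝ) : ℂ) by push_cast; ring,
    ← Complex.ofReal_cpow h0.le, ← Complex.ofReal_cpow (by linarith)]
  norm_cast


/-- The open sector `S_m = {z ≠ 0 : -π/m < arg z < π/m}`. -/
def sectorSm (m : ℕ) : Set ℂ :=
    {z : ℂ | z ≠ 0 ∧ -(Real.pi / m) < z.arg ∧ z.arg < Real.pi / m}

/-- As `z → ζ_m = e^{iπ/m}` within the sector `S_m`, `I_{m,S,b}(z)` tends to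
`I₁ = (1/m)·B(a/m, d/m)·e^{-iaπ/m}` with `a = S - b`, `d = m + b` and `B` Euler's Beta. -/
theorem stmt12 (m S b a d : ℕ) (hS : 5 ≤ S) (hlarge : S < 2 * m) (hmS : m < S)
    (hb1 : 1 ≤ b) (hb2 : 2 * b < S) (ha : a + b = S) (hd : d = m + b) :
    Tendsto (abelI m S b)
      (nhdsWithin (Complex.exp (Real.pi / m * Complex.I)) (sectorSm m))
      (nhds
        ((1 / (m : ℂ)) * Complex.betaIntegral ((a : ℂ) / m) ((d : ℂ) / m) *
          Complex.exp (-((a : ℂ) * Real.pi / m) * Complex.I))) := by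
  show Tendsto (fun z => z ^ (-(S : ℤ)) *
      ∫ t in Set.Ioi (1 : ℝ), (1 + ((t : ℂ) * z) ^ m) ^ ((b : ℂ) / m) / (t : ℂ) ^ (S + 1))
    (nhdsWithin (Complex.exp (Real.pi / m * Complex.I))
      {z : ℂ | z ≠ 0 ∧ -(Real.pi / m) < z.arg ∧ z.arg < Real.pi / m})
    (nhds
      ((1 / (m : ℂ)) * Complex.betaIntegral ((a : ℂ) / m) ((d : ℂ) / m) *
        Complex.exp (-((a : ℂ) * Real.pi / m) * Complex.I)))
  have hm3 : 3 ≤ m := by omega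
  have hm0 : 0 < m := by omega
  have hmR : (0:ℝ) < m := by exact_mod_cast hm0
  have hmR' : (m:ℝ) ≠ 0 := ne_of_gt hmR
  set p : ℝ := (b:ℝ)/m with hp
  have hp0 : 0 ≤ p := by positivity
  have hc : ((b:ℂ)/m) = ((p : ℝ) : ℂ) := by rw [hp]; push_cast; ring
  set θ : ℝ := Real.pi / m with hθ
  have hθ0 : 0 < θ := div_pos Real.pi_pos hmR
  have hθπ : θ < Real.pi := by
    rw [hθ, div_lt_iff₀ hmR]
    nlinarith [Real.pi_pos, (show (3:ℝ) ≤ m by exact_mod_cast hm3)]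
  have hmθ : (m:ℝ) * θ = Real.pi := by rw [hθ]; field_simp
  set ζ : ℂ := Complex.exp (Real.pi / m * Complex.I) with hζdef
  have hθc : ((θ : ℝ) : ℂ) = (Real.pi : ℂ) / (m : ℂ) := by rw [hθ]; push_cast; ring
  have hζθ : ζ = Complex.exp ((θ:ℂ) * Complex.I) := by rw [hζdef, hθc]
  have hζ0 : ζ ≠ 0 := Complex.exp_ne_zero _
  have hζim : ζ.im = Real.sin θ := by rw [hζθ]; exact Complex.exp_ofReal_mul_I_im θ
  have hsin : 0 < Real.sin θ := Real.sin_pos_of_pos_of_lt_pi hθ0 hθπ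
  have hargζ : ζ.arg = θ := by
    rw [hζθ, Complex.exp_mul_I]
    exact Complex.arg_cos_add_sin_mul_I (Set.mem_Ioc.mpr ⟨by linarith, hθπ.le⟩)
  set Sec : Set ℂ := {z : ℂ | z ≠ 0 ∧ -(Real.pi / m) < z.arg ∧ z.arg < Real.pi / m} with hSec
  set l : Filter ℂ := nhdsWithin ζ Sec with hl
  -- eventual facts
  have hargcont : ContinuousAt Complex.arg ζ := by
    apply Complex.continuousAt_arg
    rw [Complex.mem_slitPlane_iff]
    right
    rw [hζim]; exact ne_of_gt hsin
  have ev1 : ∀ᶠ z in l, θ/2 < z.arg := by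
    have h1 : Tendsto Complex.arg l (𝓝 θ) := by
      rw [← hargζ]
      exact hargcont.tendsto.mono_left nhdsWithin_le_nhds
    exact h1.eventually (eventually_gt_nhds (by linarith))
  have ev2 : ∀ᶠ z in l, ‖z‖ < 2 := by
    have h1 : Tendsto (fun z => ‖z‖) l (𝓝 ‖ζ‖) :=
      (continuous_norm.tendsto ζ).mono_left nhdsWithin_le_nhds
    have : ‖ζ‖ = 1 := by rw [hζθ]; simp [Complex.norm_exp]
    rw [this] at h1
    exact h1.eventually (eventually_lt_nhds one_lt_two)
  have evP : ∀ᶠ z in l, z ∈ Sec ∧ θ/2 < z.arg ∧ ‖z‖ < 2 :=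
    (eventually_mem_nhdsWithin.and (ev1.and ev2)).mono (fun z h => ⟨h.1, h.2.1, h.2.2⟩)
  -- imaginary part positivity
  have key_im : ∀ z : ℂ, z ∈ Sec → θ/2 < z.arg → ∀ t : ℝ, 1 < t →
      0 < (1 + ((t:ℂ) * z) ^ m).im := by
    intro z hz harg t ht
    obtain ⟨hz0, _, hzarg2⟩ := hz
    have ht0 : (0:ℝ) < t := by linarith
    have habs0 : 0 < ‖z‖ := norm_pos_iff.mpr hz0
    have hzeq : ((t:ℂ) * z) ^ m
        = (((t * ‖z‖) ^ m : ℝ) : ℂ) * Complex.exp (((m:ℝ) * z.arg : ℝ) * Complex.I) := by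
      conv_lhs => rw [← Complex.norm_mul_exp_arg_mul_I z]
      rw [← mul_assoc, mul_pow, ← Complex.exp_nat_mul]
      push_cast
      ring_nf
    rw [Complex.add_im, Complex.one_im, zero_add, hzeq, Complex.mul_im,
      Complex.ofReal_re, Complex.ofReal_im, zero_mul, add_zero, Complex.exp_ofReal_mul_I_im]
    apply mul_pos (pow_pos (mul_pos ht0 habs0) m)
    apply Real.sin_pos_of_pos_of_lt_pi
    · have : 0 < z.arg := by linarith
      positivity
    · rw [← hmθ]
      have hza : z.arg < θ := by rw [hθ]; exact hzarg2
      exact (mul_lt_mul_iff_right₀ hmR).mpr hza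
  -- pointwise limit of the integrand
  have h_lim : ∀ t ∈ Set.Ioi (1:ℝ),
      Tendsto (fun z : ℂ => (1 + ((t:ℂ) * z) ^ m) ^ ((b : ℂ) / m) / (t : ℂ) ^ (S + 1)) l
        (𝓝 ((((1 - t^m : ℝ)) : ℂ) ^ ((b : ℂ) / m) / (t : ℂ) ^ (S + 1))) := by
    intro t ht
    rw [Set.mem_Ioi] at ht
    have htm : 1 < t ^ m := one_lt_pow₀ ht hm0.ne'
    have hne : ((1 - t^m : ℝ) : ℂ) ≠ 0 := by
      simp only [ne_eq, Complex.ofReal_eq_zero]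
      linarith
    have hwζ : 1 + ((t:ℂ) * ζ) ^ m = ((1 - t^m : ℝ) : ℂ) := by
      rw [mul_pow, hζθ, ← Complex.exp_nat_mul]
      have e : (m:ℂ) * ((θ:ℂ) * Complex.I) = (Real.pi : ℂ) * Complex.I := by
        have : ((m:ℝ) * θ : ℝ) = Real.pi := hmθ
        calc (m:ℂ) * ((θ:ℂ) * Complex.I) = (((m:ℝ) * θ : ℝ) : ℂ) * Complex.I := by
              push_cast; ring
        _ = (Real.pi : ℂ) * Complex.I := by rw [this]
      rw [e, Complex.exp_pi_mul_I]
      push_cast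
      ring
    have hcw : Tendsto (fun z : ℂ => 1 + ((t:ℂ) * z) ^ m) l
        (𝓝[{w : ℂ | 0 ≤ w.im}] ((1 - t^m : ℝ) : ℂ)) := by
      rw [tendsto_nhdsWithin_iff]
      constructor
      · rw [← hwζ]
        exact ((continuous_const.add ((continuous_const.mul continuous_id).pow m)).tendsto ζ).mono_left
          nhdsWithin_le_nhds
      · filter_upwards [evP] with z hz
        exact le_of_lt (key_im z hz.1 hz.2.1 t ht)
    have hlogc : Tendsto (fun z : ℂ => Complex.log (1 + ((t:ℂ) * z) ^ m)) l
        (𝓝 (Complex.log ((1 - t^m : ℝ) : ℂ))) := by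
      refine (Complex.continuousWithinAt_log_of_re_neg_of_im_zero ?_ ?_).tendsto.comp hcw
      · simp only [Complex.ofReal_re]; linarith
      · exact Complex.ofReal_im _
    have hexp : Tendsto
        (fun z : ℂ => Complex.exp (Complex.log (1 + ((t:ℂ) * z) ^ m) * ((b : ℂ) / m))) l
        (𝓝 (Complex.exp (Complex.log ((1 - t^m : ℝ) : ℂ) * ((b : ℂ) / m)))) :=
      (Complex.continuous_exp.tendsto _).comp (hlogc.mul_const _)
    apply Tendsto.div_const
    rw [Complex.cpow_def_of_ne_zero hne]
    apply hexp.congr'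
    filter_upwards [evP] with z hz
    have h0 : (1 + ((t:ℂ) * z) ^ m) ≠ 0 := by
      intro h
      have := key_im z hz.1 hz.2.1 t ht
      rw [h] at this
      simp at this
    rw [Complex.cpow_def_of_ne_zero h0]
  -- dominated convergence
  have hSb : (b:ℝ) - ((S:ℝ) + 1) < -1 := by
    have : (b:ℝ) < S := by exact_mod_cast (by omega : b < S)
    linarith
  have hbound_int : Integrable (fun t : ℝ => (4:ℝ)^b * t ^ ((b:ℝ) - ((S:ℝ)+1)))
      (volume.restrict (Set.Ioi (1:ℝ))) :=
    (integrableOn_Ioi_rpow_of_lt hSb one_pos).const_mul _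
  have h_bound : ∀ᶠ z in l, ∀ᵐ t : ℝ ∂(volume.restrict (Set.Ioi (1:ℝ))),
      ‖(1 + ((t:ℂ) * z) ^ m) ^ ((b : ℂ) / m) / (t : ℂ) ^ (S + 1)‖
        ≤ (4:ℝ)^b * t ^ ((b:ℝ) - ((S:ℝ)+1)) := by
    filter_upwards [evP] with z hz
    rw [ae_restrict_iff' measurableSet_Ioi]
    apply ae_of_all
    intro t ht
    rw [Set.mem_Ioi] at ht
    have ht0 : (0:ℝ) < t := by linarith
    have habsz : ‖z‖ < 2 := hz.2.2
    have hA : ‖(1 + ((t:ℂ) * z) ^ m)‖ ≤ (4*t)^m := by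
      calc ‖(1 + ((t:ℂ) * z) ^ m)‖
          ≤ 1 + ‖(((t:ℂ) * z) ^ m)‖ := by
            simpa using norm_add_le 1 (((t:ℂ) * z) ^ m)
        _ = 1 + (t * ‖z‖)^m := by
            rw [norm_pow, norm_mul, Complex.norm_real, Real.norm_eq_abs, abs_of_pos ht0]
        _ ≤ (4*t)^m := by
            have h1 : (t * ‖z‖)^m ≤ (2*t)^m := by
              apply pow_le_pow_left₀ (by positivity)
              nlinarith [norm_nonneg z]
            have h2 : (1:ℝ) ≤ t^m := one_le_pow₀ ht.le
            have h3 : ((2:ℝ)*t)^m = 2^m * t^m := mul_pow 2 t m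
            have h4 : ((4:ℝ)*t)^m = 4^m * t^m := mul_pow 4 t m
            have h5 : ((4:ℝ))^m = 2^m * 2^m := by
              rw [show (4:ℝ) = 2*2 by norm_num, mul_pow]
            have h6 : (2:ℝ) ≤ 2^m := by
              calc (2:ℝ) = 2^1 := (pow_one 2).symm
              _ ≤ 2^m := pow_le_pow_right₀ one_le_two hm0
            have h10 : t^m ≤ 2^m * t^m := le_mul_of_one_le_left (by positivity) (by linarith)
            calc 1 + (t * ‖z‖)^m ≤ 2^m * t^m + 2^m * t^m := by
                  rw [h3] at h1; linarith
              _ = 2 * (2^m * t^m) := by ring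
              _ ≤ 2^m * (2^m * t^m) := mul_le_mul_of_nonneg_right h6 (by positivity)
              _ = (4*t)^m := by rw [h4, h5]; ring
    have hnum : ‖(1 + ((t:ℂ) * z) ^ m) ^ ((b : ℂ) / m)‖ ≤ (4*t)^b := by
      rw [hc]
      calc ‖((1 + ((t:ℂ) * z) ^ m) ^ ((p:ℝ) : ℂ))‖
          ≤ ‖(1 + ((t:ℂ) * z) ^ m)‖ ^ (((p:ℝ):ℂ).re) /
              Real.exp ((1 + ((t:ℂ) * z) ^ m).arg * ((p:ℝ):ℂ).im) :=
            Complex.norm_cpow_le _ _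
        _ = ‖(1 + ((t:ℂ) * z) ^ m)‖ ^ p := by
            simp [Complex.ofReal_re, Complex.ofReal_im]
        _ ≤ ((4*t)^m) ^ p := by
            apply Real.rpow_le_rpow (norm_nonneg _) hA hp0
        _ = (4*t)^b := by
            rw [← Real.rpow_natCast (4*t) m, ← Real.rpow_mul (by positivity)]
            rw [show (m:ℝ) * p = (b:ℝ) by rw [hp]; field_simp, Real.rpow_natCast]
    have hden : ‖(t : ℂ) ^ (S + 1)‖ = t ^ (S+1) := by
      rw [norm_pow, Complex.norm_real, Real.norm_eq_abs, abs_of_pos ht0]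
    rw [norm_div, hden]
    have hrw : (4:ℝ)^b * t ^ ((b:ℝ) - ((S:ℝ)+1)) = (4*t)^b / t^(S+1) := by
      rw [show ((b:ℝ) - ((S:ℝ)+1)) = (b:ℝ) - ((S+1:ℕ):ℝ) by push_cast; ring,
        Real.rpow_sub ht0, Real.rpow_natCast, Real.rpow_natCast, mul_pow]
      ring
    rw [hrw]
    have hposd : (0:ℝ) < t^(S+1) := by positivity
    exact (div_le_div_iff_of_pos_right hposd).mpr hnum
  -- measurability
  have hF_meas : ∀ z : ℂ, AEStronglyMeasurable
      (fun t : ℝ => (1 + ((t:ℂ) * z) ^ m) ^ ((b:ℂ)/m) / (t:ℂ)^(S+1))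
      (volume.restrict (Set.Ioi (1:ℝ))) := by
    intro z
    apply Measurable.aestronglyMeasurable
    exact (aux_measurable_cpow_const
        (measurable_const.add ((Complex.measurable_ofReal.mul_const z).pow_const m)) _).div
      (Complex.measurable_ofReal.pow_const (S+1))
  have hDCT :=
    tendsto_integral_filter_of_dominated_convergence (μ := volume.restrict (Set.Ioi (1:ℝ)))
      (l := l)
      (F := fun (z : ℂ) (t : ℝ) => (1 + ((t:ℂ) * z) ^ m) ^ ((b:ℂ)/m) / (t:ℂ)^(S+1))
      (f := fun t : ℝ => (((1 - t^m : ℝ)):ℂ) ^ ((b:ℂ)/m) / (t:ℂ)^(S+1))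
      (fun t => (4:ℝ)^b * t ^ ((b:ℝ) - ((S:ℝ)+1)))
      (Eventually.of_forall hF_meas) h_bound hbound_int
      ((ae_restrict_iff' measurableSet_Ioi).2 (ae_of_all _ h_lim))
  have hzpow : Tendsto (fun z : ℂ => z ^ (-(S:ℤ))) l (𝓝 (ζ ^ (-(S:ℤ)))) :=
    ((continuousAt_zpow₀ ζ (-(S:ℤ)) (Or.inl hζ0)).tendsto).mono_left nhdsWithin_le_nhds
  have hmain := hzpow.mul hDCT
  suffices hval : ζ ^ (-(S:ℤ)) *
      ∫ t in Set.Ioi (1:ℝ), (((1 - t^m : ℝ)):ℂ) ^ ((b:ℂ)/m) / (t:ℂ)^(S+1)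
      = (1 / (m:ℂ)) * Complex.betaIntegral ((a:ℂ)/m) ((d:ℂ)/m) *
        Complex.exp (-((a:ℂ) * Real.pi / m) * Complex.I) by
    rw [← hval]
    exact hmain
  have hint : (∫ t in Set.Ioi (1:ℝ), (((1 - t^m : ℝ)):ℂ) ^ ((b:ℂ)/m) / (t:ℂ)^(S+1))
      = ((∫ t in Set.Ioi (1:ℝ), (t^m - 1) ^ p / t ^ (S+1) : ℝ) : ℂ) *
        Complex.exp (((p * Real.pi : ℝ) : ℂ) * Complex.I) := by
    rw [show ((∫ t in Set.Ioi (1:ℝ), (t^m - 1) ^ p / t ^ (S+1) : ℝ) : ℂ)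
        = ∫ t in Set.Ioi (1:ℝ), (((t^m - 1) ^ p / t ^ (S+1) : ℝ) : ℂ) from integral_ofReal.symm,
      ← integral_mul_const]
    apply setIntegral_congr_fun measurableSet_Ioi
    intro t ht
    rw [Set.mem_Ioi] at ht
    have htm : 1 < t^m := one_lt_pow₀ ht hm0.ne'
    have ht0 : (0:ℝ) < t := by linarith
    dsimp only
    rw [hc, aux_neg_cpow (by linarith : (1:ℝ) - t^m < 0)]
    rw [show -(1 - t^m) = t^m - 1 from by ring]
    push_cast
    ring
  have hmC' : (m:ℂ) ≠ 0 := Nat.cast_ne_zero.mpr hm0.ne'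
  have hζpow : ζ ^ (-(S:ℤ)) = Complex.exp ((↑(-(S:ℤ)) : ℂ) * ((θ:ℂ) * Complex.I)) := by
    rw [hζθ]
    exact (Complex.exp_int_mul _ _).symm
  have hexpeq : Complex.exp ((↑(-(S:ℤ)) : ℂ) * ((θ:ℂ) * Complex.I)) *
      Complex.exp (((p * Real.pi : ℝ) : ℂ) * Complex.I)
      = Complex.exp (-((a:ℂ) * Real.pi / m) * Complex.I) := by
    rw [← Complex.exp_add]
    congr 1
    have haS : (a:ℂ) + (b:ℂ) = (S:ℂ) := by exact_mod_cast ha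
    rw [hθc, hp]
    push_cast
    linear_combination (↑Real.pi * Complex.I / (m:ℂ)) * haS
  rw [hint, aux_beta m b a d hm0 hd, aux_subst m S b a hm0 ha, hζpow, Complex.ofReal_mul,
    ← hexpeq]
  push_cast
  field_simp
  ring
end

section
/- For r ≥ 1, lim_{z → r e^{iπ/m}, z ∈ S_m} I_{m,S,b}(z) = (1/m)·e^{-iaπ/m} ∫_0^{1/r^m} (1-u)^{b/m} u^{c/m} du, where a = S - b and c = S - m - b. -/
open Complex MeasureTheory Filter
open Topology Set

lemma im_ofReal_mul_exp (A φ : ℝ) :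
    ((A:ℂ) * Complex.exp ((φ:ℂ) * Complex.I)).im = A * Real.sin φ := by
  simp [Complex.exp_mul_I, Complex.mul_im, Complex.add_re, Complex.add_im,
    Complex.sin_ofReal_re, Complex.cos_ofReal_im, Complex.sin_ofReal_im]

lemma im_pow_pos {m : ℕ} (hm : m ≠ 0) {z : ℂ} (hz : z ≠ 0) (h1 : 0 < z.arg)
    (h2 : z.arg < Real.pi / m) : 0 < (z ^ m).im := by
  have hmR : (0:ℝ) < m := by exact_mod_cast Nat.pos_of_ne_zero hm
  have hzm : z ^ m = ((‖z‖ ^ m : ℝ) : ℂ) * Complex.exp ((↑(m * z.arg) : ℂ) * Complex.I) := by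
    conv_lhs => rw [← Complex.norm_mul_exp_arg_mul_I z]
    rw [mul_pow, ← Complex.exp_nat_mul]
    push_cast
    ring_nf
  rw [hzm, im_ofReal_mul_exp]
  have h3 : 0 < m * z.arg := by positivity
  have h4 : m * z.arg < Real.pi := by
    have := (mul_lt_mul_of_pos_left h2 hmR)
    rwa [mul_div_cancel₀ _ hmR.ne'] at this
  have : 0 < Real.sin (m * z.arg) := Real.sin_pos_of_pos_of_lt_pi h3 h4
  have habs : 0 < ‖z‖ ^ m := pow_pos (norm_pos_iff.mpr hz) m
  positivity

lemma tendsto_F (m S b : ℕ) (hm : m ≠ 0) {r : ℝ} (hr : 1 ≤ r) {l : Filter ℂ} {z₀ : ℂ}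
    (hz₀m : z₀ ^ m = -((r:ℂ) ^ m))
    (hten : Tendsto (fun z : ℂ => z) l (𝓝 z₀))
    (hev : ∀ᶠ z in l, 0 < (z ^ m).im)
    {t : ℝ} (ht : 1 < t) :
    Tendsto (fun z => (1 + ((t:ℂ) * z) ^ m) ^ ((b:ℂ)/m) / (t:ℂ)^(S+1)) l
      (𝓝 (Complex.exp ((Real.pi:ℂ) * b / m * Complex.I) *
        ((((t*r)^m - 1) ^ ((b:ℝ)/m) / t^(S+1) : ℝ) : ℂ))) := by
  have htr : 1 < t * r := by nlinarith
  have hy : (0:ℝ) < (t*r)^m - 1 := by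
    have := one_lt_pow₀ htr hm; linarith
  set y : ℝ := (t*r)^m - 1 with hydef
  have hval : (1 : ℂ) + ((t:ℂ)*z₀)^m = ((1 - (t*r)^m : ℝ) : ℂ) := by
    rw [mul_pow, hz₀m]; push_cast; ring
  have himb : ∀ z : ℂ, (1 + ((t:ℂ)*z)^m).im = t^m * (z^m).im := by
    intro z
    have h1 : ((t:ℂ)*z)^m = ((t^m : ℝ) : ℂ) * z^m := by rw [mul_pow]; norm_cast
    simp [h1, Complex.add_im, Complex.mul_im, ← Complex.ofReal_pow]
  have hbase : Tendsto (fun z : ℂ => 1 + ((t:ℂ)*z)^m) l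
      (𝓝[{w : ℂ | 0 ≤ w.im}] ((1 - (t*r)^m : ℝ) : ℂ)) := by
    rw [tendsto_nhdsWithin_iff]
    constructor
    · have hc : Continuous fun z : ℂ => 1 + ((t:ℂ)*z)^m := by continuity
      have h := (hc.tendsto z₀).comp hten
      rw [show (fun z : ℂ => 1 + ((t:ℂ)*z)^m) ∘ (fun z : ℂ => z)
          = fun z : ℂ => 1 + ((t:ℂ)*z)^m from rfl] at h
      rwa [hval] at h
    · filter_upwards [hev] with z hz
      show (0:ℝ) ≤ _
      rw [himb]
      have ht0 : (0:ℝ) < t := lt_trans one_pos ht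
      positivity
  have hre : ((1 - (t*r)^m : ℝ) : ℂ).re < 0 := by
    simp only [Complex.ofReal_re]; linarith
  have him0 : ((1 - (t*r)^m : ℝ) : ℂ).im = 0 := Complex.ofReal_im _
  have hlog := (Complex.tendsto_log_nhdsWithin_im_nonneg_of_re_neg_of_im_zero hre him0).comp hbase
  have habs : ‖((1 - (t*r)^m : ℝ) : ℂ)‖ = y := by
    rw [Complex.norm_real, Real.norm_eq_abs, abs_of_neg (by linarith : (1 - (t*r)^m : ℝ) < 0)]
    rw [hydef]; ring
  rw [habs] at hlog
  have hexp := ((Complex.continuous_exp.tendsto _).comp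
    (hlog.mul_const ((b:ℂ)/m))).div_const ((t:ℂ)^(S+1))
  have hne : ∀ᶠ z in l, (1 + ((t:ℂ)*z)^m) ≠ 0 := by
    filter_upwards [hev] with z hz
    intro h0
    have := himb z
    rw [h0] at this
    simp only [Complex.zero_im] at this
    have ht0 : (0:ℝ) < t := lt_trans one_pos ht
    nlinarith [pow_pos ht0 m]
  have heq : (fun z : ℂ => Complex.exp ((Complex.log ∘ fun z : ℂ => 1 + ((t:ℂ)*z)^m) z
        * ((b:ℂ)/m)) / (t:ℂ)^(S+1))
      =ᶠ[l] fun z => (1 + ((t:ℂ) * z) ^ m) ^ ((b:ℂ)/m) / (t:ℂ)^(S+1) := by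
    filter_upwards [hne] with z hz
    rw [Complex.cpow_def_of_ne_zero hz]
    rfl
  have hF := hexp.congr' heq
  convert hF using 2
  rw [add_mul, Complex.exp_add]
  have e1 : Complex.exp ((Real.log y : ℂ) * ((b:ℂ)/m)) = ((y ^ ((b:ℝ)/m) : ℝ) : ℂ) := by
    rw [show ((Real.log y : ℂ) * ((b:ℂ)/m)) = ((Real.log y * ((b:ℝ)/m) : ℝ) : ℂ) by push_cast; ring]
    rw [← Complex.ofReal_exp]
    congr 1
    rw [Real.rpow_def_of_pos hy]
  have e2 : Complex.exp ((Real.pi : ℂ) * Complex.I * ((b:ℂ)/m))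
      = Complex.exp ((Real.pi:ℂ) * b / m * Complex.I) := by
    congr 1; ring
  rw [e1, e2]
  push_cast
  ring


private lemma ptwise (m S b c : ℕ) (hm : m ≠ 0) (hc : c + m + b = S) (x : ℝ) (hx1 : 1 < x) :
    (m * x^(m-1) / (x^m)^2) * ((1 - (x^m)⁻¹) ^ ((b:ℝ)/m) * ((x^m)⁻¹) ^ ((c:ℝ)/m))
      = (m:ℝ) * ((x^m - 1) ^ ((b:ℝ)/m)) / x^(S+1) := by
  have hx0 : (0:ℝ) < x := lt_trans one_pos hx1
  have hxm1 : 1 < x ^ m := one_lt_pow₀ hx1 hm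
  have hxmul : ∀ k : ℕ, (x ^ m : ℝ) ^ ((k:ℝ)/m) = x ^ k := by
    intro k
    rw [← Real.rpow_natCast x m, ← Real.rpow_mul hx0.le]
    rw [show (m:ℝ) * ((k:ℝ)/m) = (k:ℝ) by field_simp]
    exact Real.rpow_natCast x k
  have h1 : ((1:ℝ) - (x^m)⁻¹) ^ ((b:ℝ)/m) = (x^m - 1) ^ ((b:ℝ)/m) / x ^ b := by
    rw [show (1:ℝ) - (x^m)⁻¹ = (x^m - 1) / x^m by field_simp]
    rw [Real.div_rpow (by linarith) (by positivity), hxmul b]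
  have h2 : (((x:ℝ)^m)⁻¹) ^ ((c:ℝ)/m) = (x ^ c)⁻¹ := by
    rw [Real.inv_rpow (by positivity), hxmul c]
  rw [h1, h2]
  rw [show x^(m-1) = x^m / x by rw [eq_div_iff hx0.ne', ← pow_succ]; congr 1; omega]
  rw [show x^(S+1) = x^m * x^b * x^c * x by
    rw [← pow_add, ← pow_add, ← pow_succ]; congr 1; omega]
  field_simp

private lemma cov (m S b c : ℕ) (hm : m ≠ 0) (hc : c + m + b = S) (r : ℝ) (hr : 1 ≤ r) :
    ∫ u in Ioo (0:ℝ) ((r^m)⁻¹), (1-u) ^ ((b:ℝ)/m) * u ^ ((c:ℝ)/m)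
      = (m : ℝ) * (r^S)⁻¹ * ∫ t in Ioi (1:ℝ), ((t*r)^m - 1) ^ ((b:ℝ)/m) / t^(S+1) := by
  have hr0 : (0:ℝ) < r := lt_of_lt_of_le one_pos hr
  -- the substitution map
  set f : ℝ → ℝ := fun t => ((t*r)^m)⁻¹ with hf
  have himg : f '' Ioi 1 = Ioo 0 ((r^m)⁻¹) := by
    ext u
    constructor
    · rintro ⟨t, ht, rfl⟩
      have ht1 : (1:ℝ) < t := ht
      have htr : r < t * r := by nlinarith
      have h0 : (0:ℝ) < t * r := by nlinarith
      refine ⟨by positivity, ?_⟩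
      exact inv_strictAnti₀ (by positivity) (pow_lt_pow_left₀ htr hr0.le hm)
    · rintro ⟨hu0, hur⟩
      have hin : (r:ℝ)^m < u⁻¹ := by
        have := (lt_inv_comm₀ (by positivity) (by positivity)).1 hur
        simpa using this
      refine ⟨(u⁻¹) ^ ((m:ℝ)⁻¹) / r, ?_, ?_⟩
      · have h1 : r < (u⁻¹) ^ ((m:ℝ)⁻¹) := by
          calc r = ((r^m : ℝ)) ^ ((m:ℝ)⁻¹) := by
                  rw [← Real.rpow_natCast r m, ← Real.rpow_mul hr0.le]
                  rw [mul_inv_cancel₀ (by exact_mod_cast hm), Real.rpow_one]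
            _ < (u⁻¹) ^ ((m:ℝ)⁻¹) := by
                  apply Real.rpow_lt_rpow (by positivity) hin (by positivity)
        exact (one_lt_div hr0).2 h1
      · show (((u⁻¹) ^ ((m:ℝ)⁻¹) / r * r) ^ m)⁻¹ = u
        rw [div_mul_cancel₀ _ hr0.ne', ← Real.rpow_natCast ((u⁻¹) ^ ((m:ℝ)⁻¹)) m,
          ← Real.rpow_mul (by positivity),
          inv_mul_cancel₀ (by exact_mod_cast hm), Real.rpow_one, inv_inv]
  have hderiv : ∀ t ∈ Ioi (1:ℝ), HasDerivWithinAt f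
      (-((m * (t*r)^(m-1) * r) / ((t*r)^m)^2)) (Ioi 1) t := by
    intro t ht
    have h0 : t * r ≠ 0 := by
      have : (0:ℝ) < t * r := by nlinarith [show (1:ℝ) < t from ht]
      exact this.ne'
    have h1 : HasDerivAt (fun t : ℝ => (t*r)^m) (m * (t*r)^(m-1) * r) t := by
      have := ((hasDerivAt_id t).mul_const r).fun_pow m
      simpa [mul_comm, mul_assoc] using this
    have h2 : HasDerivAt f (-((m * (t*r)^(m-1) * r) / ((t*r)^m)^2)) t := by
      have := h1.inv (pow_ne_zero m h0)
      simpa [hf, neg_div, Pi.inv_def] using this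
    exact h2.hasDerivWithinAt
  have hinj : Set.InjOn f (Ioi 1) := by
    intro t1 h1 t2 h2 heq
    have e1 : (0:ℝ) < t1 * r := by nlinarith [show (1:ℝ) < t1 from h1]
    have e2 : (0:ℝ) < t2 * r := by nlinarith [show (1:ℝ) < t2 from h2]
    have : (t1*r)^m = (t2*r)^m := by
      have := congrArg Inv.inv heq
      simpa [hf] using this
    have : t1 * r = t2 * r :=
      (pow_left_strictMonoOn₀ (by exact hm)).injOn e1.le e2.le this
    exact mul_right_cancel₀ hr0.ne' this
  have key := integral_image_eq_integral_abs_deriv_smul measurableSet_Ioi hderiv hinj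
    (fun u => (1-u) ^ ((b:ℝ)/m) * u ^ ((c:ℝ)/m))
  rw [himg] at key
  rw [key]
  rw [← integral_const_mul]
  apply setIntegral_congr_fun measurableSet_Ioi
  intro t ht
  have ht1 : (1:ℝ) < t := ht
  have hx1 : 1 < t * r := by nlinarith
  have hx0 : (0:ℝ) < t * r := by linarith
  have habs : |(-((m * (t*r)^(m-1) * r) / ((t*r)^m)^2))| = (m * (t*r)^(m-1) * r) / ((t*r)^m)^2 := by
    rw [abs_neg, _root_.abs_of_nonneg]
    positivity
  show _ • _ = _
  rw [smul_eq_mul, habs, hf]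
  have := ptwise m S b c hm hc (t*r) hx1
  have hrearr : (m * (t*r)^(m-1) * r) / ((t*r)^m)^2
      = r * ((m:ℝ) * (t*r)^(m-1) / ((t*r)^m)^2) := by ring
  rw [hrearr, mul_assoc, this]
  rw [show ((t*r):ℝ)^(S+1) = t^(S+1) * r^(S+1) from mul_pow t r (S+1)]
  have htS : (0:ℝ) < t ^ (S+1) := by positivity
  field_simp
  ring

lemma pow_rpow_div (m k : ℕ) (hm : m ≠ 0) {x : ℝ} (hx : 0 ≤ x) :
    (x^m) ^ ((k:ℝ)/m) = x^k := by
  rw [← Real.rpow_natCast x m, ← Real.rpow_mul hx,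
    show (m:ℝ)*((k:ℝ)/m) = (k:ℝ) by field_simp, Real.rpow_natCast]


/-- For `r ≥ 1`, as `z → r·e^{iπ/m}` within `S_m`, `I_{m,S,b}(z)` tends to
`(1/m)·e^{-iaπ/m} ∫_0^{1/r^m} (1-u)^{b/m} u^{c/m} du`, with `a = S-b`, `c = S-m-b`. -/
theorem stmt13 (m S b a c : ℕ) (hS : 5 ≤ S) (hlarge : S < 2 * m) (hmS : m < S)
    (hb1 : 1 ≤ b) (hbc : b ≤ S - m - 1) (ha : a + b = S) (hc : c + m + b = S)
    (r : ℝ) (hr : 1 ≤ r) :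
    Tendsto (abelI m S b)
      (nhdsWithin ((r : ℂ) * Complex.exp (Real.pi / m * Complex.I)) (sectorSm m))
      (nhds
        ((1 / (m : ℂ)) * Complex.exp (-((a : ℂ) * Real.pi / m) * Complex.I) *
          ((∫ u in (0 : ℝ)..(1 / r ^ m),
              (1 - u) ^ ((b : ℝ) / m) * u ^ ((c : ℝ) / m) : ℝ) : ℂ))) := by
  have hm3 : 3 ≤ m := by omega
  have hm0 : m ≠ 0 := by omega
  have hmR : (0:ℝ) < m := by exact_mod_cast Nat.pos_of_ne_zero hm0
  have hr0 : (0:ℝ) < r := lt_of_lt_of_le one_pos hr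
  set θ : ℝ := Real.pi / m with hθdef
  have hθpos : 0 < θ := by positivity
  have hθltpi : θ < Real.pi := by
    rw [hθdef, div_lt_iff₀ hmR]
    nlinarith [Real.pi_pos,
      mul_le_mul_of_nonneg_left (show (3:ℝ) ≤ (m:ℝ) by exact_mod_cast hm3) Real.pi_pos.le]
  set z₀ : ℂ := (r:ℂ) * Complex.exp ((Real.pi:ℂ) / m * Complex.I) with hz₀def
  have hcoe : ((Real.pi:ℂ)/(m:ℂ)) = ((θ:ℝ):ℂ) := by rw [hθdef]; push_cast; ring
  have hz₀ne : z₀ ≠ 0 := mul_ne_zero (by exact_mod_cast hr0.ne') (Complex.exp_ne_zero _)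
  have hz₀m : z₀ ^ m = -((r:ℂ)^m) := by
    rw [hz₀def, mul_pow, ← Complex.exp_nat_mul]
    rw [show (m:ℂ) * ((Real.pi:ℂ)/m * Complex.I) = (Real.pi:ℂ) * Complex.I by
      have : (m:ℂ) ≠ 0 := by exact_mod_cast hm0
      field_simp]
    rw [Complex.exp_pi_mul_I]; ring
  have harg : z₀.arg = θ := by
    rw [hz₀def, hcoe, Complex.exp_mul_I]
    exact Complex.arg_mul_cos_add_sin_mul_I hr0 ⟨by linarith [Real.pi_pos], le_of_lt hθltpi⟩
  set l := nhdsWithin z₀ (sectorSm m) with hldef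
  have hten : Tendsto (fun z : ℂ => z) l (𝓝 z₀) := tendsto_id.mono_left nhdsWithin_le_nhds
  have hsinθ : 0 < Real.sin θ := Real.sin_pos_of_pos_of_lt_pi hθpos hθltpi
  have him : z₀.im = r * Real.sin θ := by rw [hz₀def, hcoe]; exact im_ofReal_mul_exp r θ
  have hslit : z₀ ∈ Complex.slitPlane := by
    rw [Complex.mem_slitPlane_iff]
    right
    rw [him]; positivity
  have hargten : Tendsto Complex.arg l (𝓝 θ) := by
    rw [← harg]
    exact (Complex.continuousAt_arg hslit).tendsto.mono_left nhdsWithin_le_nhds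
  have hev_arg_pos : ∀ᶠ z in l, 0 < z.arg := hargten.eventually (eventually_gt_nhds hθpos)
  have hev_sector : ∀ᶠ z in l, z ∈ sectorSm m := eventually_mem_nhdsWithin
  have hev_im : ∀ᶠ z in l, 0 < (z ^ m).im := by
    filter_upwards [hev_arg_pos, hev_sector] with z h1 h2
    exact im_pow_pos hm0 h2.1 h1 h2.2.2
  have habsten : Tendsto (fun z => ‖z‖) l (𝓝 r) := by
    have habs0 : ‖z₀‖ = r := by
      rw [hz₀def, norm_mul, Complex.norm_real, Real.norm_eq_abs, hcoe, Complex.norm_exp_ofReal_mul_I,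
        abs_of_pos hr0, mul_one]
    rw [← habs0]
    exact (continuous_norm.tendsto z₀).mono_left nhdsWithin_le_nhds
  have hev_abs : ∀ᶠ z in l, ‖z‖ < r + 1 :=
    habsten.eventually (eventually_lt_nhds (by linarith))
  -- dominated convergence
  set C : ℝ := (1 + (r+1)^m) ^ ((b:ℝ)/m) with hCdef
  have hbS : b < S := by omega
  have hbound_int : IntegrableOn (fun t : ℝ => C * t ^ ((b:ℝ) - (S+1))) (Set.Ioi 1) := by
    apply Integrable.const_mul
    apply integrableOn_Ioi_rpow_of_lt _ zero_lt_one
    have : (b:ℝ) < (S:ℝ) := by exact_mod_cast hbS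
    linarith
  have hDCT : Tendsto (fun z : ℂ => ∫ t in Set.Ioi (1:ℝ),
      (1 + ((t : ℂ) * z) ^ m) ^ ((b : ℂ) / m) / (t : ℂ) ^ (S + 1)) l
      (𝓝 (∫ t in Set.Ioi (1:ℝ), Complex.exp ((Real.pi:ℂ) * b / m * Complex.I) *
        ((((t*r)^m - 1) ^ ((b:ℝ)/m) / t^(S+1) : ℝ) : ℂ))) := by
    apply tendsto_integral_filter_of_dominated_convergence
      (fun t : ℝ => C * t ^ ((b:ℝ) - (S+1)))
    · filter_upwards [hev_im] with z hz
      apply ContinuousOn.aestronglyMeasurable _ measurableSet_Ioi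
      intro t ht
      have ht1 : (1:ℝ) < t := ht
      have ht0 : (0:ℝ) < t := by linarith
      apply ContinuousWithinAt.div
      · apply ContinuousAt.continuousWithinAt
        have hc : Continuous fun s : ℝ => 1 + ((s:ℂ)*z)^m :=
          continuous_const.add ((Complex.continuous_ofReal.mul continuous_const).pow m)
        apply (_root_.continuousAt_cpow_const _).comp hc.continuousAt
        rw [Complex.mem_slitPlane_iff]
        right
        have h1 : ((t:ℂ)*z)^m = ((t^m : ℝ) : ℂ) * z^m := by rw [mul_pow]; norm_cast
        have : (1 + ((t:ℂ)*z)^m).im = t^m * (z^m).im := by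
          simp [h1, Complex.add_im, Complex.mul_im, ← Complex.ofReal_pow]
        rw [this]
        positivity
      · exact (Complex.continuous_ofReal.pow (S+1)).continuousWithinAt
      · exact pow_ne_zero _ (by exact_mod_cast ht0.ne')
    · filter_upwards [hev_abs] with z hz
      rw [ae_restrict_iff' measurableSet_Ioi]
      apply ae_of_all
      intro t ht
      have ht1 : (1:ℝ) < t := ht
      have ht0 : (0:ℝ) < t := by linarith
      rw [norm_div]
      have hd : ‖(t:ℂ)^(S+1)‖ = t^(S+1) := by
        rw [norm_pow, Complex.norm_real, Real.norm_eq_abs, abs_of_pos ht0]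
      have hcast : ((b:ℂ)/(m:ℂ)) = (((b:ℝ)/(m:ℝ) : ℝ) : ℂ) := by push_cast; ring
      rw [hd, hcast, Complex.norm_cpow_real]
      have h1 : ‖1 + ((t:ℂ)*z)^m‖ ≤ 1 + (t*(r+1))^m := by
        calc ‖1 + ((t:ℂ)*z)^m‖
            ≤ ‖(1:ℂ)‖ + ‖((t:ℂ)*z)^m‖ := norm_add_le _ _
          _ = 1 + (t * ‖z‖)^m := by
              rw [norm_one, norm_pow, norm_mul, Complex.norm_real, Real.norm_eq_abs, abs_of_pos ht0]
          _ ≤ 1 + (t*(r+1))^m := by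
              have : t * ‖z‖ ≤ t * (r+1) :=
                mul_le_mul_of_nonneg_left hz.le ht0.le
              have := pow_le_pow_left₀ (by positivity) this m
              linarith
      have h2 : (1 + (t*(r+1))^m : ℝ) ≤ (1 + (r+1)^m) * t^m := by
        have htm : 1 ≤ t^m := one_le_pow₀ ht1.le
        rw [mul_pow]
        nlinarith [pow_nonneg (show (0:ℝ) ≤ r+1 by linarith) m]
      have h3 : ‖1 + ((t:ℂ)*z)^m‖ ^ ((b:ℝ)/m)
          ≤ ((1 + (r+1)^m) * t^m) ^ ((b:ℝ)/m) :=
        Real.rpow_le_rpow (norm_nonneg _) (h1.trans h2) (by positivity)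
      have h4 : (((1 + (r+1)^m) * t^m : ℝ)) ^ ((b:ℝ)/m) = C * t^b := by
        rw [Real.mul_rpow (by positivity) (by positivity), pow_rpow_div m b hm0 ht0.le]
      have hfinal : C * t ^ ((b:ℝ) - ((S:ℝ)+1)) = C * t^b / t^(S+1) := by
        rw [Real.rpow_sub ht0, Real.rpow_natCast,
          show ((S:ℝ)+1) = (((S+1) : ℕ):ℝ) by push_cast; ring, Real.rpow_natCast]
        ring
      rw [hfinal]
      have hnum : ‖1 + ((t:ℂ)*z)^m‖ ^ ((b:ℝ)/m) ≤ C * t^b := h3.trans_eq h4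
      gcongr
    · exact hbound_int
    · rw [ae_restrict_iff' measurableSet_Ioi]
      apply ae_of_all
      intro t ht
      exact tendsto_F m S b hm0 hr hz₀m hten hev_im ht
  have hpow : Tendsto (fun z : ℂ => z ^ (-(S:ℤ))) l (𝓝 (z₀ ^ (-(S:ℤ)))) :=
    ((continuousAt_zpow₀ z₀ _ (Or.inl hz₀ne)).tendsto).mono_left nhdsWithin_le_nhds
  have hmain := hpow.mul hDCT
  set J : ℝ := ∫ t in Set.Ioi (1:ℝ), ((t*r)^m - 1) ^ ((b:ℝ)/m) / t^(S+1) with hJdef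
  have hGint : (∫ t in Set.Ioi (1:ℝ), Complex.exp ((Real.pi:ℂ) * b / m * Complex.I) *
        ((((t*r)^m - 1) ^ ((b:ℝ)/m) / t^(S+1) : ℝ) : ℂ))
      = Complex.exp ((Real.pi:ℂ)*b/m*Complex.I) * (J:ℂ) := by
    rw [integral_const_mul]
    congr 1
    exact integral_ofReal
  rw [hGint] at hmain
  have hK : (∫ u in (0:ℝ)..(1/r^m), (1-u)^((b:ℝ)/m) * u^((c:ℝ)/m)) = m * (r^S)⁻¹ * J := by
    rw [intervalIntegral.integral_of_le (by positivity : (0:ℝ) ≤ 1/r^m)]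
    rw [MeasureTheory.integral_Ioc_eq_integral_Ioo]
    rw [show (1/r^m : ℝ) = (r^m)⁻¹ from one_div _]
    exact cov m S b c hm0 hc r hr
  have hz₀S : z₀ ^ (-(S:ℤ)) = ((((r:ℝ)^S)⁻¹ : ℝ) : ℂ)
      * Complex.exp (-((S:ℂ) * Real.pi/(m:ℂ)) * Complex.I) := by
    rw [hz₀def, mul_zpow]
    congr 1
    · rw [zpow_neg, zpow_natCast]; push_cast; ring
    · rw [← Complex.exp_int_mul]
      congr 1
      push_cast
      ring
  have hmC : (m:ℂ) ≠ 0 := by exact_mod_cast hm0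
  have hexpeq : Complex.exp (-((S:ℂ) * Real.pi/(m:ℂ)) * Complex.I)
        * Complex.exp ((Real.pi:ℂ)*b/m*Complex.I)
      = Complex.exp (-((a:ℂ) * Real.pi / m) * Complex.I) := by
    rw [← Complex.exp_add]
    congr 1
    have haC : (a:ℂ) + (b:ℂ) = (S:ℂ) := by exact_mod_cast ha
    linear_combination (Real.pi : ℂ) * Complex.I / (m:ℂ) * haC
  have hvalue : (1 / (m : ℂ)) * Complex.exp (-((a : ℂ) * Real.pi / m) * Complex.I) *
          ((∫ u in (0 : ℝ)..(1 / r ^ m),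
              (1 - u) ^ ((b : ℝ) / m) * u ^ ((c : ℝ) / m) : ℝ) : ℂ)
      = z₀ ^ (-(S:ℤ)) * (Complex.exp ((Real.pi:ℂ)*b/m*Complex.I) * (J:ℂ)) := by
    rw [hK, hz₀S]
    rw [show ((((r:ℝ)^S)⁻¹ : ℝ) : ℂ) * Complex.exp (-((S:ℂ) * Real.pi/(m:ℂ)) * Complex.I)
          * (Complex.exp ((Real.pi:ℂ)*b/m*Complex.I) * (J:ℂ))
        = ((((r:ℝ)^S)⁻¹ : ℝ) : ℂ) * (J:ℂ)
          * (Complex.exp (-((S:ℂ) * Real.pi/(m:ℂ)) * Complex.I)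
            * Complex.exp ((Real.pi:ℂ)*b/m*Complex.I)) by ring]
    rw [hexpeq]
    push_cast
    field_simp
  rw [hvalue]
  exact hmain
end

section
/- Let ℱ be the characteristic function of a real random variable X possessing moments of all orders, whose law satisfies the fixed-point equation X =(in law) e^{-mτ}([a+1]X + [b]Y) with τ ~ Exp(1) independent of all else, where [n]Z denotes the sum of n independent copies of Z. Then for all x ≠ 0, ℱ(x) = (x/(m|x|^{1+1/m})) ∫_0^x ℱ^{a+1}(t) 𝒢^b(t) |t|^{1/m - 1} dt, where 𝒢 is the characteristic function of Y. -/
open MeasureTheory ProbabilityTheory Complex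
open scoped ENNReal NNReal

section Helpers

lemma auxA {Ω : Type*} [MeasurableSpace Ω] {μ : Measure Ω} [IsProbabilityMeasure μ]
    {X Y : Ω → ℝ} (h : IndepFun X Y μ) (hX : Measurable X) (hY : Measurable Y)
    {g h' : ℝ → ℂ} (hg : Measurable g) (hh : Measurable h') :
    ∫ ω, g (X ω) * h' (Y ω) ∂μ = (∫ ω, g (X ω) ∂μ) * ∫ ω, h' (Y ω) ∂μ := by
  have hmap := (indepFun_iff_map_prod_eq_prod_map_map hX.aemeasurable hY.aemeasurable).1 h
  have hpair : AEMeasurable (fun ω => (X ω, Y ω)) μ := (hX.prodMk hY).aemeasurable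
  have hgh : AEStronglyMeasurable (fun p : ℝ × ℝ => g p.1 * h' p.2)
      (Measure.map (fun ω => (X ω, Y ω)) μ) :=
    ((hg.comp measurable_fst).mul (hh.comp measurable_snd)).aestronglyMeasurable
  calc ∫ ω, g (X ω) * h' (Y ω) ∂μ
      = ∫ p : ℝ × ℝ, g p.1 * h' p.2 ∂(Measure.map (fun ω => (X ω, Y ω)) μ) :=
        (integral_map hpair hgh).symm
    _ = ∫ p : ℝ × ℝ, g p.1 * h' p.2 ∂((μ.map X).prod (μ.map Y)) := by rw [hmap]
    _ = (∫ x, g x ∂(μ.map X)) * ∫ y, h' y ∂(μ.map Y) := integral_prod_mul g h'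
    _ = (∫ ω, g (X ω) ∂μ) * ∫ ω, h' (Y ω) ∂μ := by
        rw [integral_map hX.aemeasurable hg.aestronglyMeasurable,
          integral_map hY.aemeasurable hh.aestronglyMeasurable]

lemma auxB {Ω : Type*} [MeasurableSpace Ω] {μ : Measure Ω} [IsProbabilityMeasure μ]
    {ι : Type*} {f : ι → Ω → ℝ}
    (hindep : iIndepFun f μ) (hmeas : ∀ i, Measurable (f i))
    (u : ℝ) (s : Finset ι) :
    ∫ ω, Complex.exp (Complex.I * u * (∑ i ∈ s, f i ω : ℝ)) ∂μ
      = ∏ i ∈ s, ∫ ω, Complex.exp (Complex.I * u * (f i ω : ℝ)) ∂μ := by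
  classical
  induction s using Finset.cons_induction with
  | empty => simp
  | cons i s hi ih =>
      have hind : IndepFun (f i) (fun ω => ∑ j ∈ s, f j ω) μ := by
        have := (hindep.indepFun_finsetSum_of_notMem hmeas hi).symm
        convert this using 2 with ω
        simp [Finset.sum_apply]
      have hexp : Measurable fun t : ℝ => Complex.exp (Complex.I * u * (t : ℂ)) := by fun_prop
      have key := auxA hind (hmeas i) (by exact Finset.measurable_sum s fun j _ => hmeas j)
        hexp hexp
      calc ∫ ω, Complex.exp (Complex.I * u * ((∑ j ∈ Finset.cons i s hi, f j ω : ℝ) : ℂ)) ∂μ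
          = ∫ ω, Complex.exp (Complex.I * u * (f i ω : ℝ))
              * Complex.exp (Complex.I * u * ((∑ j ∈ s, f j ω : ℝ) : ℂ)) ∂μ := by
            congr 1; funext ω
            rw [Finset.sum_cons, ← Complex.exp_add]
            congr 1
            push_cast
            ring
        _ = (∫ ω, Complex.exp (Complex.I * u * (f i ω : ℝ)) ∂μ)
              * ∫ ω, Complex.exp (Complex.I * u * ((∑ j ∈ s, f j ω : ℝ) : ℂ)) ∂μ := key
        _ = ∏ j ∈ Finset.cons i s hi, ∫ ω, Complex.exp (Complex.I * u * (f j ω : ℝ)) ∂μ := by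
            rw [ih, Finset.prod_cons]
lemma auxImagePos {m x : ℝ} (hm : 0 < m) (hx : 0 < x) :
    (fun s => x * Real.exp (-m * s)) '' Set.Ioi 0 = Set.Ioo 0 x := by
  ext t
  simp only [Set.mem_image, Set.mem_Ioi, Set.mem_Ioo]
  constructor
  · rintro ⟨s, hs, rfl⟩
    refine ⟨by positivity, ?_⟩
    have h1 : Real.exp (-m * s) < 1 := Real.exp_lt_one_iff.2 (by nlinarith)
    nlinarith [Real.exp_pos (-m * s)]
  · rintro ⟨ht0, htx⟩
    refine ⟨Real.log (x / t) / m, ?_, ?_⟩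
    · have h1 : 1 < x / t := (one_lt_div ht0).2 htx
      have := Real.log_pos h1
      positivity
    · have h2 : -m * (Real.log (x / t) / m) = Real.log ((x / t)⁻¹) := by
        rw [Real.log_inv]
        field_simp
      rw [h2, Real.exp_log (by positivity)]
      field_simp
lemma auxImageNeg {m x : ℝ} (hm : 0 < m) (hx : x < 0) :
    (fun s => x * Real.exp (-m * s)) '' Set.Ioi 0 = Set.Ioo x 0 := by
  have h : (fun s => x * Real.exp (-m * s)) = (fun t : ℝ => -t) ∘ (fun s => (-x) * Real.exp (-m * s)) := by
    funext s; simp only [Function.comp_apply]; ring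
  rw [h, Set.image_comp, auxImagePos hm (by linarith)]
  have : (fun t : ℝ => -t) '' Set.Ioo 0 (-x) = -(Set.Ioo 0 (-x)) := Set.image_neg_eq_neg
  rw [this]
  simp
lemma auxScalar {m x : ℝ} (hm : 0 < m) (hx : x ≠ 0) (s : ℝ) :
    |x * (Real.exp (-m * s) * -m)| * |x * Real.exp (-m * s)| ^ ((1:ℝ)/m - 1)
      = (m * |x| * |x| ^ ((1:ℝ)/m - 1)) * Real.exp (-s) := by
  have hm' : m ≠ 0 := hm.ne'
  have hxp : (0:ℝ) < |x| := abs_pos.2 hx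
  have he : (0:ℝ) < Real.exp (-m * s) := Real.exp_pos _
  have h1 : |x * (Real.exp (-m * s) * -m)| = |x| * (Real.exp (-m * s) * m) := by
    rw [abs_mul, abs_mul, abs_of_pos he, abs_neg, abs_of_pos hm]
  have h2 : |x * Real.exp (-m * s)| = |x| * Real.exp (-m * s) := by
    rw [abs_mul, abs_of_pos he]
  have hE : Real.exp (-m * s) * Real.exp (-m * s * ((1:ℝ)/m - 1)) = Real.exp (-s) := by
    rw [← Real.exp_add]
    congr 1
    field_simp
    ring
  rw [h1, h2, Real.mul_rpow hxp.le he.le, ← Real.exp_mul,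
    show |x| * (Real.exp (-m * s) * m) * (|x| ^ ((1:ℝ)/m - 1) * Real.exp (-m * s * ((1:ℝ)/m - 1)))
      = (m * |x| * |x| ^ ((1:ℝ)/m - 1)) * (Real.exp (-m * s) * Real.exp (-m * s * ((1:ℝ)/m - 1)))
      by ring, hE]

lemma auxCOV {m : ℝ} (hm : 0 < m) {x : ℝ} (hx : x ≠ 0) (H : ℝ → ℂ) :
    (∫ t in (0:ℝ)..x, H t * ((|t| ^ ((1:ℝ)/m - 1) : ℝ) : ℂ))
      = (x * m * |x| ^ ((1:ℝ)/m - 1)) •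
          ∫ s in Set.Ioi (0:ℝ), Real.exp (-s) • H (x * Real.exp (-m * s)) := by
  have hm' : m ≠ 0 := hm.ne'
  have hxp : (0:ℝ) < |x| := abs_pos.2 hx
  set g : ℝ → ℂ := fun t => H t * ((|t| ^ ((1:ℝ)/m - 1) : ℝ) : ℂ) with hg
  set φ : ℝ → ℝ := fun s => x * Real.exp (-m * s) with hφ
  have hd : ∀ s ∈ Set.Ioi (0:ℝ),
      HasDerivWithinAt φ (x * (Real.exp (-m * s) * -m)) (Set.Ioi 0) s := by
    intro s _
    have h := (((hasDerivAt_id s).const_mul (-m)).exp.const_mul x).hasDerivWithinAt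
      (s := Set.Ioi (0:ℝ))
    exact h.congr_deriv (by simp [mul_comm])
  have hinj : Set.InjOn φ (Set.Ioi 0) := by
    intro s _ t _ hst
    have h2 : Real.exp (-m * s) = Real.exp (-m * t) := mul_left_cancel₀ hx hst
    have h3 : -m * s = -m * t := Real.exp_injective h2
    exact mul_left_cancel₀ (neg_ne_zero.2 hm') h3
  have key : ∫ t in φ '' Set.Ioi 0, g t
      = ∫ s in Set.Ioi (0:ℝ), |x * (Real.exp (-m * s) * -m)| • g (φ s) :=
    integral_image_eq_integral_abs_deriv_smul measurableSet_Ioi hd hinj g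
  have hpt : ∀ s : ℝ, |x * (Real.exp (-m * s) * -m)| • g (φ s)
      = (m * |x| * |x| ^ ((1:ℝ)/m - 1)) • (Real.exp (-s) • H (x * Real.exp (-m * s))) := by
    intro s
    rw [hg, hφ]
    simp only
    rw [show (H (x * Real.exp (-m * s)) * ((|x * Real.exp (-m * s)| ^ ((1:ℝ)/m - 1) : ℝ) : ℂ))
        = (|x * Real.exp (-m * s)| ^ ((1:ℝ)/m - 1)) • H (x * Real.exp (-m * s)) by
      rw [Complex.real_smul]; ring]
    rw [smul_smul, smul_smul, auxScalar hm hx s]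
  have key2 : ∫ t in φ '' Set.Ioi 0, g t
      = (m * |x| * |x| ^ ((1:ℝ)/m - 1)) • ∫ s in Set.Ioi (0:ℝ),
          Real.exp (-s) • H (x * Real.exp (-m * s)) := by
    rw [key]
    simp_rw [hpt]
    rw [integral_smul]
  rcases hx.lt_or_gt with hneg | hpos
  · rw [intervalIntegral.integral_symm, intervalIntegral.integral_of_le hneg.le,
      integral_Ioc_eq_integral_Ioo, show Set.Ioo x 0 = φ '' Set.Ioi 0 from (auxImageNeg hm hneg).symm,
      key2, ← neg_smul]
    congr 1
    rw [abs_of_neg hneg]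
    ring
  · rw [intervalIntegral.integral_of_le hpos.le, integral_Ioc_eq_integral_Ioo,
      show Set.Ioo 0 x = φ '' Set.Ioi 0 from (auxImagePos hm hpos).symm, key2]
    congr 1
    rw [abs_of_pos hpos]
    ring

lemma auxExp (G : ℝ → ℂ) :
    ∫ s, G s ∂(expMeasure 1) = ∫ s in Set.Ioi (0:ℝ), Real.exp (-s) • G s := by
  set f : ℝ → NNReal := fun s => Real.toNNReal (if 0 ≤ s then Real.exp (-s) else 0) with hf
  have hfm : Measurable f := by
    apply Measurable.real_toNNReal
    exact Measurable.ite measurableSet_Ici (by fun_prop) measurable_const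
  have h0 : expMeasure 1 = volume.withDensity (fun s => (f s : ℝ≥0∞)) := by
    have h1 : expMeasure 1 = volume.withDensity (exponentialPDF 1) := rfl
    rw [h1]
    congr 1
    funext s
    rw [exponentialPDF_eq, hf]
    simp only [one_mul]
    rfl
  rw [h0, integral_withDensity_eq_integral_smul hfm G]
  have hpt : (fun s => f s • G s)
      = Set.indicator (Set.Ici (0:ℝ)) (fun s => Real.exp (-s) • G s) := by
    funext s
    by_cases hs : (0:ℝ) ≤ s
    · rw [Set.indicator_of_mem (Set.mem_Ici.2 hs), hf]
      simp only [if_pos hs]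
      rw [NNReal.smul_def, Real.coe_toNNReal _ (Real.exp_nonneg _)]
    · rw [Set.indicator_of_notMem (by simpa using hs), hf]
      simp [if_neg hs]
  rw [hpt, integral_indicator measurableSet_Ici, integral_Ici_eq_integral_Ioi]

lemma auxNorm (u v : ℝ) : ‖Complex.exp (Complex.I * u * v)‖ ≤ 1 := by
  rw [Complex.norm_exp]
  have h : (Complex.I * u * v).re = 0 := by simp
  rw [h, Real.exp_zero]

end Helpers

/-- If `X` (with law `μX`) satisfies the fixed-point equation in law
`X = e^{-mτ}([a+1]X + [b]Y)` where `τ ~ Exp(1)` and all the copies are mutually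
independent, and `X`, `Y` have moments of all orders, then the characteristic
function `ℱ` of `X` satisfies, for all `x ≠ 0`,
`ℱ(x) = (x/(m|x|^{1+1/m})) ∫_0^x ℱ^{a+1}(t) 𝒢^b(t) |t|^{1/m-1} dt`,
where `𝒢` is the characteristic function of `Y`. -/
theorem stmt14 (a b m : ℕ) (ha : 0 < a) (hb : 0 < b) (hm : 0 < m)
    (μX μY : Measure ℝ) [IsProbabilityMeasure μX] [IsProbabilityMeasure μY]
    (hmomX : ∀ p : ℕ, Integrable (fun t : ℝ => |t| ^ p) μX)
    (hmomY : ∀ p : ℕ, Integrable (fun t : ℝ => |t| ^ p) μY)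
    (Ω : Type*) [MeasureSpace Ω] [IsProbabilityMeasure (ℙ : Measure Ω)]
    (F : Option (Fin (a + 1) ⊕ Fin b) → Ω → ℝ)
    (hmeas : ∀ i, Measurable (F i))
    (hindep : iIndepFun F ℙ)
    (hτ : Measure.map (F none) ℙ = expMeasure 1)
    (hX : ∀ i : Fin (a + 1), Measure.map (F (some (Sum.inl i))) ℙ = μX)
    (hY : ∀ j : Fin b, Measure.map (F (some (Sum.inr j))) ℙ = μY)
    (hfix :
      Measure.map
        (fun ω =>
          Real.exp (-(m : ℝ) * F none ω) *
            ((∑ i : Fin (a + 1), F (some (Sum.inl i)) ω) +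
              ∑ j : Fin b, F (some (Sum.inr j)) ω))
        ℙ = μX) :
    ∀ x : ℝ, x ≠ 0 →
      (∫ t : ℝ, Complex.exp (Complex.I * x * t) ∂μX) =
        ((x / (m * |x| ^ (1 + 1 / (m : ℝ))) : ℝ) : ℂ) *
          ∫ t in (0 : ℝ)..x,
            (∫ s : ℝ, Complex.exp (Complex.I * t * s) ∂μX) ^ (a + 1) *
              (∫ s : ℝ, Complex.exp (Complex.I * t * s) ∂μY) ^ b *
              ((|t| ^ ((1 : ℝ) / m - 1) : ℝ) : ℂ) := by
  intro x hx
  classical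
  have hmR : (0:ℝ) < (m:ℝ) := by exact_mod_cast hm
  have hxp : (0:ℝ) < |x| := abs_pos.2 hx
  -- notation
  set Fc : ℝ → ℂ := fun u => ∫ s : ℝ, Complex.exp (Complex.I * u * s) ∂μX with hFc
  set Gc : ℝ → ℂ := fun u => ∫ s : ℝ, Complex.exp (Complex.I * u * s) ∂μY with hGc
  set H : ℝ → ℂ := fun u => Fc u ^ (a + 1) * Gc u ^ b with hH
  set S : Ω → ℝ := fun ω => ∑ i : Fin (a + 1) ⊕ Fin b, F (some i) ω with hS
  have hSmeas : Measurable S := Finset.measurable_sum _ fun i _ => hmeas _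
  have hinj : ∀ p ∈ (Finset.univ : Finset (Fin (a+1) ⊕ Fin b)), ∀ q ∈ Finset.univ,
      (some p : Option (Fin (a+1) ⊕ Fin b)) = some q → p = q := fun p _ q _ h =>
    Option.some_injective _ h
  have hexpMeas : ∀ u : ℝ, Measurable fun t : ℝ => Complex.exp (Complex.I * u * (t:ℂ)) := by
    intro u; fun_prop
  -- characteristic function of S
  have charS : ∀ u : ℝ, (∫ ω, Complex.exp (Complex.I * u * (S ω : ℂ)) ∂ℙ)
      = Fc u ^ (a + 1) * Gc u ^ b := by
    intro u
    have hsum : ∀ ω, S ω = ∑ j ∈ Finset.univ.image some, F j ω := by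
      intro ω; rw [Finset.sum_image hinj]
    have step1 : (∫ ω, Complex.exp (Complex.I * u * (S ω : ℂ)) ∂ℙ)
        = ∫ ω, Complex.exp (Complex.I * u *
            ((∑ j ∈ Finset.univ.image some, F j ω : ℝ) : ℂ)) ∂ℙ := by
      exact integral_congr_ae (ae_of_all _ fun ω => by beta_reduce; rw [hsum ω])
    rw [step1, auxB hindep hmeas u _, Finset.prod_image hinj]
    rw [show (∏ i : Fin (a+1) ⊕ Fin b, ∫ ω, Complex.exp (Complex.I * u * (F (some i) ω : ℂ)) ∂ℙ)
        = (∏ i : Fin (a+1), ∫ ω, Complex.exp (Complex.I * u * (F (some (Sum.inl i)) ω : ℂ)) ∂ℙ)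
          * ∏ j : Fin b, ∫ ω, Complex.exp (Complex.I * u * (F (some (Sum.inr j)) ω : ℂ)) ∂ℙ
      from Fintype.prod_sum_type _]
    have h1 : ∀ i : Fin (a+1),
        (∫ ω, Complex.exp (Complex.I * u * (F (some (Sum.inl i)) ω : ℂ)) ∂ℙ) = Fc u := by
      intro i
      have e1 : (∫ t : ℝ, Complex.exp (Complex.I * u * t) ∂μX) = Fc u := rfl
      rw [← e1, ← hX i, integral_map (hmeas _).aemeasurable (hexpMeas u).aestronglyMeasurable]
    have h2 : ∀ j : Fin b,
        (∫ ω, Complex.exp (Complex.I * u * (F (some (Sum.inr j)) ω : ℂ)) ∂ℙ) = Gc u := by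
      intro j
      have e1 : (∫ t : ℝ, Complex.exp (Complex.I * u * t) ∂μY) = Gc u := rfl
      rw [← e1, ← hY j, integral_map (hmeas _).aemeasurable (hexpMeas u).aestronglyMeasurable]
    rw [Finset.prod_congr rfl fun i _ => h1 i, Finset.prod_congr rfl fun j _ => h2 j,
      Finset.prod_const, Finset.prod_const, Finset.card_univ, Finset.card_univ,
      Fintype.card_fin, Fintype.card_fin]
  -- independence of τ and S
  have hτS : IndepFun (F none) S ℙ := by
    have hnone : (none : Option (Fin (a+1) ⊕ Fin b)) ∉ Finset.univ.image some := by simp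
    have h := (hindep.indepFun_finsetSum_of_notMem hmeas hnone).symm
    have hfun : (∑ j ∈ Finset.univ.image some, F j) = S := by
      funext ω; rw [Finset.sum_apply, hS]; simp only
      rw [Finset.sum_image hinj]
    rwa [hfun] at h
  haveI : IsProbabilityMeasure (expMeasure 1) := isProbabilityMeasure_expMeasure one_pos
  haveI : IsProbabilityMeasure (Measure.map S ℙ) := Measure.isProbabilityMeasure_map hSmeas.aemeasurable
  have hmapPair : Measure.map (fun ω => (F none ω, S ω)) ℙ = (expMeasure 1).prod (Measure.map S ℙ) := by
    rw [← hτ]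
    exact (indepFun_iff_map_prod_eq_prod_map_map (hmeas none).aemeasurable
      hSmeas.aemeasurable).1 hτS
  -- the kernel function
  set K : ℝ × ℝ → ℂ := fun p =>
    Complex.exp (Complex.I * x * ((Real.exp (-(m:ℝ) * p.1) * p.2 : ℝ) : ℂ)) with hK
  have hKmeas : Measurable K := by
    apply Complex.measurable_exp.comp
    apply Measurable.const_mul
    apply Complex.measurable_ofReal.comp
    fun_prop
  have hKint : Integrable K ((expMeasure 1).prod (Measure.map S ℙ)) := by
    refine (integrable_const (1:ℝ)).mono' hKmeas.aestronglyMeasurable (ae_of_all _ fun p => ?_)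
    simpa only [hK] using auxNorm x (Real.exp (-(m:ℝ) * p.1) * p.2)
  -- main chain
  have main1 : (∫ t : ℝ, Complex.exp (Complex.I * x * t) ∂μX)
      = ∫ ω, K (F none ω, S ω) ∂ℙ := by
    have hg : Measurable (fun ω =>
        Real.exp (-(m:ℝ) * F none ω) *
          ((∑ i : Fin (a + 1), F (some (Sum.inl i)) ω) +
            ∑ j : Fin b, F (some (Sum.inr j)) ω)) :=
      (Real.measurable_exp.comp ((hmeas none).const_mul (-(m:ℝ)))).mul
        ((Finset.measurable_sum _ fun i _ => hmeas _).add
          (Finset.measurable_sum _ fun j _ => hmeas _))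
    rw [← hfix, integral_map hg.aemeasurable (hexpMeas x).aestronglyMeasurable]
    refine integral_congr_ae (ae_of_all _ fun ω => ?_)
    simp only [hK, hS, Fintype.sum_sum_type]
  have main2 : (∫ ω, K (F none ω, S ω) ∂ℙ)
      = ∫ p, K p ∂((expMeasure 1).prod (Measure.map S ℙ)) := by
    rw [← hmapPair,
      integral_map ((hmeas none).prodMk hSmeas).aemeasurable hKmeas.aestronglyMeasurable]
  have main3 : (∫ p, K p ∂((expMeasure 1).prod (Measure.map S ℙ)))
      = ∫ s, (∫ t, K (s, t) ∂(Measure.map S ℙ)) ∂(expMeasure 1) := integral_prod K hKint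
  have main4 : ∀ s : ℝ, (∫ t, K (s, t) ∂(Measure.map S ℙ)) = H (x * Real.exp (-(m:ℝ) * s)) := by
    intro s
    have hpt : ∀ t : ℝ, K (s, t)
        = Complex.exp (Complex.I * ((x * Real.exp (-(m:ℝ) * s) : ℝ) : ℂ) * (t : ℂ)) := by
      intro t; simp only [hK]; push_cast; ring_nf
    have : (∫ t, K (s, t) ∂(Measure.map S ℙ))
        = ∫ t : ℝ, Complex.exp (Complex.I * ((x * Real.exp (-(m:ℝ) * s) : ℝ) : ℂ) * (t : ℂ))
            ∂(Measure.map S ℙ) := by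
      exact integral_congr_ae (ae_of_all _ fun t => hpt t)
    rw [this, integral_map hSmeas.aemeasurable
      (hexpMeas (x * Real.exp (-(m:ℝ) * s))).aestronglyMeasurable]
    simp only [hH]
    exact charS (x * Real.exp (-(m:ℝ) * s))
  have main5 : (∫ s, H (x * Real.exp (-(m:ℝ) * s)) ∂(expMeasure 1))
      = ∫ s in Set.Ioi (0:ℝ), Real.exp (-s) • H (x * Real.exp (-(m:ℝ) * s)) :=
    auxExp _
  have hLHS : (∫ t : ℝ, Complex.exp (Complex.I * x * t) ∂μX)
      = ∫ s in Set.Ioi (0:ℝ), Real.exp (-s) • H (x * Real.exp (-(m:ℝ) * s)) := by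
    rw [main1, main2, main3, ← main5]
    exact integral_congr_ae (ae_of_all _ fun s => main4 s)
  -- change of variables
  have hCOV := auxCOV hmR hx H
  rw [hLHS, hCOV]
  -- scalar arithmetic
  rw [Complex.real_smul, ← mul_assoc, ← Complex.ofReal_mul]
  have hW : (0:ℝ) < |x| ^ ((1:ℝ)/(m:ℝ) - 1) := Real.rpow_pos_of_pos hxp _
  have hE : |x| ^ (1 + 1/(m:ℝ)) = |x| * (|x| * |x| ^ ((1:ℝ)/(m:ℝ) - 1)) := by
    rw [show (1:ℝ) + 1/(m:ℝ) = 1 + (1 + ((1:ℝ)/(m:ℝ) - 1)) by ring, Real.rpow_add hxp,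
      Real.rpow_add hxp, Real.rpow_one]
  have hscal : x / ((m:ℝ) * |x| ^ (1 + 1/(m:ℝ))) * (x * (m:ℝ) * |x| ^ ((1:ℝ)/(m:ℝ) - 1)) = 1 := by
    rw [hE]
    have habs : |x| * |x| = x * x := abs_mul_abs_self x
    field_simp
    linear_combination (-1:ℝ) * habs
  rw [hscal]
  simp
end

section
/- If f, g are differentiable nonvanishing complex-valued functions on an interval satisfying f' = -(1/S) f^{a+1} g^b and g' = -(1/S) f^c g^{d+1} with a + b = c + d = S and m = a - c = d - b, then the function 1/g^m - 1/f^m is constant (it is a first integral of the system). -/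
/-- First integral of the monomial system: if `f, g` are differentiable, nonvanishing
on an interval `s` and satisfy `f' = -(1/S) f^{a+1} g^b`, `g' = -(1/S) f^c g^{d+1}`
with `a+b = c+d = S`, `m = a-c = d-b`, then `1/g^m - 1/f^m` is constant on `s`. -/
theorem stmt16 (a b c d S m : ℕ)
    (hab : a + b = S) (hcd : c + d = S) (hm1 : a = c + m) (hm2 : d = b + m)
    (hS : 0 < S) (hmpos : 0 < m)
    (s : Set ℝ) (hs : s.OrdConnected) (f g : ℝ → ℂ)
    (hfne : ∀ x ∈ s, f x ≠ 0) (hgne : ∀ x ∈ s, g x ≠ 0)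
    (hf : ∀ x ∈ s, HasDerivAt f (-(1 / (S : ℂ)) * f x ^ (a + 1) * g x ^ b) x)
    (hg : ∀ x ∈ s, HasDerivAt g (-(1 / (S : ℂ)) * f x ^ c * g x ^ (d + 1)) x) :
    ∀ x ∈ s, ∀ y ∈ s,
      1 / g x ^ m - 1 / f x ^ m = 1 / g y ^ m - 1 / f y ^ m := by
  obtain ⟨k, rfl⟩ : ∃ k, m = k + 1 := ⟨m - 1, (Nat.succ_pred_eq_of_pos hmpos).symm⟩
  subst hm1 hm2
  have hSne : (S : ℂ) ≠ 0 := by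
    exact_mod_cast Nat.cast_ne_zero.mpr hS.ne'
  have key : ∀ x ∈ s, HasDerivAt (fun x => 1 / g x ^ (k + 1) - 1 / f x ^ (k + 1)) 0 x := by
    intro x hx
    have hgx := hgne x hx
    have hfx := hfne x hx
    have p1 : HasDerivAt (fun z : ℂ => (z ^ (k + 1))⁻¹)
        (-(((k + 1 : ℕ) : ℂ) * g x ^ (k + 1 - 1)) / (g x ^ (k + 1)) ^ 2) (g x) :=
      (hasDerivAt_pow (k + 1) (g x)).inv (pow_ne_zero _ hgx)
    have p2 : HasDerivAt (fun z : ℂ => (z ^ (k + 1))⁻¹)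
        (-(((k + 1 : ℕ) : ℂ) * f x ^ (k + 1 - 1)) / (f x ^ (k + 1)) ^ 2) (f x) :=
      (hasDerivAt_pow (k + 1) (f x)).inv (pow_ne_zero _ hfx)
    have h1 := p1.comp x (hg x hx)
    have h2 := p2.comp x (hf x hx)
    have h3 := h1.sub h2
    simp only [one_div]
    convert h3 using 1
    · rfl
    · rfl
    simp only [Nat.add_sub_cancel, Nat.cast_add, Nat.cast_one]
    field_simp
    ring
  have hconv : Convex ℝ s := hs.convex
  intro x hx y hy
  have := hconv.norm_image_sub_le_of_norm_hasDerivWithin_le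
    (f := fun x => 1 / g x ^ (k + 1) - 1 / f x ^ (k + 1)) (f' := fun _ => 0)
    (fun z hz => (key z hz).hasDerivWithinAt) (C := 0) (fun z hz => by simp) hy hx
  have h0 : ‖(1 / g x ^ (k + 1) - 1 / f x ^ (k + 1)) -
      (1 / g y ^ (k + 1) - 1 / f y ^ (k + 1))‖ ≤ 0 := by simpa using this
  exact sub_eq_zero.mp (norm_le_zero_iff.mp h0)
end
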